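/- arXiv:1505.00823 — 4 statements merged into one kernel-verified Lean document; each statement's English description precedes it below -/
import Mathlib

section
/- Let (m,n) be a coprime pair of positive integers and let D be an (m,n)-Dyck path whose rank set R(D) differs from R_0 = {0,1,…,m+n−1}. Then area(D) = area(ℛ(D)) + 1, where ℛ(D) is the (m,n)-Dyck path with rank set ℛ(R(D)) = (R(D)∖{max R(D)}) ∪ {max R(D) − m − n}. -/
/-- The list of ranks of the lattice points visited by a path (excluding the final
point), starting from rank `r`.  A `true` entry is a north (`u`) step, which adds `m`
to the rank; a `false` entry is an east (`d`) step, which subtracts `n`. -/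
def rankWalk (m n : ℤ) : List Bool → ℤ → List ℤ
  | [], _ => []
  | b :: bs, r => r :: rankWalk m n bs (r + if b then m else -n)

/-- An `(m,n)`-path: a word of `n` north steps (`true`) and `m` east steps (`false`). -/
def IsPathWord (m n : ℕ) (P : List Bool) : Prop :=
  P.length = m + n ∧ P.count true = n

/-- An `(m,n)`-Dyck path: an `(m,n)`-path all of whose ranks are nonnegative. -/
def IsDyckWord (m n : ℕ) (P : List Bool) : Prop :=
  IsPathWord m n P ∧ ∀ r ∈ rankWalk (m : ℤ) (n : ℤ) P 0, 0 ≤ r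

/-- The rank set of a path: the ranks of its `m+n` lattice points other than the endpoint. -/
def rankSet (m n : ℕ) (P : List Bool) : Finset ℤ :=
  (rankWalk (m : ℤ) (n : ℤ) P 0).toFinset

/-- `R` is the rank set of some `(m,n)`-path. -/
def IsRankSet (m n : ℕ) (R : Finset ℤ) : Prop :=
  ∃ P : List Bool, IsPathWord m n P ∧ rankSet m n P = R

/-- `R` is the rank set of some `(m,n)`-Dyck path. -/
def IsDyckRankSet (m n : ℕ) (R : Finset ℤ) : Prop :=
  ∃ P : List Bool, IsDyckWord m n P ∧ rankSet m n P = R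

/-- The rank set `R₀ = {0, 1, …, m+n-1}` of the unique Dyck path of area `0`. -/
def baseRankSet (m n : ℕ) : Finset ℤ :=
  (Finset.range (m + n)).image (fun i : ℕ => (i : ℤ))

/-- The right operation `ℛ(R) = (R \ {max R}) ∪ {max R - m - n}`. -/
def rightOp (m n : ℕ) (R : Finset ℤ) : Finset ℤ :=
  (R.erase (WithBot.unbotD 0 R.max)) ∪ {WithBot.unbotD 0 R.max - m - n}

/-- The lattice point of the path `P` reached after `i` steps. -/
def pathPt (P : List Bool) : ℕ → ℤ × ℤ
  | 0 => (0, 0)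
  | i + 1 => pathPt P i + (if P.getD i false then (0, 1) else (1, 0))

/- `area P` is the number of unit lattice squares lying to the right of the path `P`
and to the left of the diagonal `y = (n/m)x`: the square with lower-left corner
`(x, y)` is to the left of the diagonal iff its lower-right corner is weakly above
the diagonal, i.e. `n(x+1) ≤ my`, and it is to the right of the path iff the north
step of the path at height `y` starts at a point with first coordinate `≤ x`. -/
open Classical in

noncomputable def area (m n : ℕ) (P : List Bool) : ℕ :=
  ((Finset.range m ×ˢ Finset.range n).filter (fun q =>
      (n : ℤ) * (q.1 + 1) ≤ (m : ℤ) * q.2 ∧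
      ∃ i < P.length, P.getD i false = true ∧
        (pathPt P i).2 = (q.2 : ℤ) ∧ (pathPt P i).1 ≤ (q.1 : ℤ))).card

lemma rankWalk_length (m n : ℤ) (P : List Bool) (r : ℤ) :
    (rankWalk m n P r).length = P.length := by
  induction P generalizing r with
  | nil => rfl
  | cons b bs ih => simp [rankWalk, ih]

lemma rankWalk_getD (m n : ℤ) (P : List Bool) (r : ℤ) (i : ℕ) (hi : i < P.length) :
    (rankWalk m n P r).getD i 0 =
      r + m * (P.take i).count true - n * (P.take i).count false := by
  induction P generalizing r i with
  | nil => simp at hi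
  | cons b bs ih =>
    cases i with
    | zero => simp [rankWalk]
    | succ i =>
      simp only [rankWalk, List.getD_cons_succ]
      rw [ih _ i (by simpa using hi)]
      cases b <;> simp [List.count_cons] <;> push_cast <;> ring

lemma take_succ_of_lt (P : List Bool) (i : ℕ) (hi : i < P.length) :
    P.take (i+1) = P.take i ++ [P.getD i false] := by
  rw [List.take_succ, List.getElem?_eq_getElem hi, List.getD_eq_getElem _ _ hi]
  rfl

lemma pathPt_eq (P : List Bool) (i : ℕ) (hi : i ≤ P.length) :
    pathPt P i = (((P.take i).count false : ℤ), ((P.take i).count true : ℤ)) := by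
  induction i with
  | zero => simp [pathPt]
  | succ i ih =>
    have hi' : i < P.length := hi
    rw [pathPt, ih hi'.le, take_succ_of_lt P i hi']
    cases h : P.getD i false <;>
      simp [Prod.ext_iff, List.count_append, h] <;> push_cast <;> ring

lemma pathPt_fst (P : List Bool) (i : ℕ) (hi : i ≤ P.length) :
    (pathPt P i).1 = ((P.take i).count false : ℤ) := by rw [pathPt_eq P i hi]

lemma pathPt_snd (P : List Bool) (i : ℕ) (hi : i ≤ P.length) :
    (pathPt P i).2 = ((P.take i).count true : ℤ) := by rw [pathPt_eq P i hi]

lemma count_take_mono (P : List Bool) (c : Bool) {i j : ℕ} (h : i ≤ j) :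
    (P.take i).count c ≤ (P.take j).count c := by
  have he : P.take i = (P.take j).take i := by rw [List.take_take, min_eq_left h]
  rw [he]; exact (List.take_prefix _ _).count_le c

lemma count_take_succ_self (P : List Bool) (c : Bool) (i : ℕ) (hi : i < P.length)
    (hc : P.getD i false = c) : (P.take (i+1)).count c = (P.take i).count c + 1 := by
  rw [take_succ_of_lt P i hi, List.count_append, hc]
  simp

lemma count_take_le (P : List Bool) (c : Bool) (i : ℕ) :
    (P.take i).count c ≤ P.count c :=
  (List.take_prefix _ _).count_le c

lemma step_uniq (P : List Bool) (c : Bool) {i j : ℕ} (hi : i < P.length) (hj : j < P.length)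
    (hci : P.getD i false = c) (hcj : P.getD j false = c)
    (h : (P.take i).count c = (P.take j).count c) : i = j := by
  rcases lt_trichotomy i j with hlt | he | hlt
  · have h1 := count_take_succ_self P c i hi hci
    have h2 := count_take_mono P c (show i+1 ≤ j from hlt)
    omega
  · exact he
  · have h1 := count_take_succ_self P c j hj hcj
    have h2 := count_take_mono P c (show j+1 ≤ i from hlt)
    omega

lemma step_exists (P : List Bool) (c : Bool) (k : ℕ) (hk : k < P.count c) :
    ∃ i, i < P.length ∧ P.getD i false = c ∧ (P.take i).count c = k := by
  induction P generalizing k with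
  | nil => simp at hk
  | cons b bs ih =>
    by_cases hb : b = c
    · subst hb
      cases k with
      | zero => exact ⟨0, by simp, by simp, by simp⟩
      | succ k =>
        obtain ⟨i, h1, h2, h3⟩ := ih k (by simp [List.count_cons] at hk ⊢; omega)
        exact ⟨i+1, by simpa using h1, by simpa using h2,
          by simp [List.count_cons, h3]⟩
    · obtain ⟨i, h1, h2, h3⟩ := ih k (by simpa [List.count_cons, hb] using hk)
      refine ⟨i+1, by simpa using h1, by simpa using h2, ?_⟩
      simp [List.count_cons, h3, hb]

lemma list_sum_eq (L : List ℤ) : L.sum = ∑ i ∈ Finset.range L.length, L.getD i 0 := by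
  induction L with
  | nil => simp
  | cons a l ih =>
    rw [List.sum_cons, ih, List.length_cons, Finset.sum_range_succ']
    simp [add_comm]

lemma rank_eq_mod (m n : ℕ) (P : List Bool) (i : ℕ) (hi : i < P.length) :
    (rankWalk m n P 0).getD i 0 + n * i = ((m:ℤ)+n) * (P.take i).count true := by
  rw [rankWalk_getD _ _ _ _ i hi]
  have h := List.count_true_add_count_false (P.take i)
  rw [List.length_take] at h
  have h' : ((P.take i).count true : ℤ) + (P.take i).count false = i := by
    have : min i P.length = i := min_eq_left hi.le
    exact_mod_cast this ▸ h
  linear_combination (-(n : ℤ)) * h'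

lemma rank_inj_mod (m n : ℕ) (hcop : Nat.Coprime m n)
    (P : List Bool) (hlen : P.length = m + n) {i j : ℕ} (hi : i < P.length) (hj : j < P.length)
    (hdvd : ((m:ℤ)+n) ∣ ((rankWalk m n P 0).getD i 0 - (rankWalk m n P 0).getD j 0)) :
    i = j := by
  have h1 := rank_eq_mod m n P i hi
  have h2 := rank_eq_mod m n P j hj
  have hd2 : ((m:ℤ)+n) ∣ (n:ℤ) * ((i:ℤ) - j) := by
    obtain ⟨k, hk⟩ := hdvd
    exact ⟨((P.take i).count true : ℤ) - (P.take j).count true - k, by linear_combination h1 - h2 - hk⟩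
  have hcop' : IsCoprime ((m:ℤ)+n) (n:ℤ) := by
    have : IsCoprime ((m+n : ℕ):ℤ) ((n:ℕ):ℤ) :=
      Nat.isCoprime_iff_coprime.2 (Nat.coprime_add_self_left.2 hcop)
    exact_mod_cast this
  have hdij : ((m:ℤ)+n) ∣ ((i:ℤ) - j) := hcop'.dvd_of_dvd_mul_left hd2
  have h0 : ((i:ℤ) - j) = 0 := Int.eq_zero_of_abs_lt_dvd hdij (by
    rw [abs_sub_lt_iff]
    constructor <;> push_cast <;> omega)
  omega

lemma rankWalk_nodup (m n : ℕ) (hcop : Nat.Coprime m n) (P : List Bool)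
    (hlen : P.length = m + n) : (rankWalk m n P 0).Nodup := by
  rw [List.nodup_iff_injective_get]
  rintro ⟨i, hi⟩ ⟨j, hj⟩ h
  rw [rankWalk_length] at hi hj
  have : (rankWalk (m:ℤ) n P 0).getD i 0 = (rankWalk (m:ℤ) n P 0).getD j 0 := by
    rw [List.getD_eq_getElem _ _ (by rwa [rankWalk_length]),
        List.getD_eq_getElem _ _ (by rwa [rankWalk_length])]
    exact_mod_cast h
  have hd : ((m:ℤ)+n) ∣ ((rankWalk (m:ℤ) n P 0).getD i 0 - (rankWalk (m:ℤ) n P 0).getD j 0) := by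
    rw [this, sub_self]; exact dvd_zero _
  have := rank_inj_mod m n hcop P hlen hi hj hd
  simpa using this

lemma count_take_add (P : List Bool) (i : ℕ) (hi : i ≤ P.length) :
    (P.take i).count true + (P.take i).count false = i := by
  have h := List.count_true_add_count_false (P.take i)
  rw [List.length_take, min_eq_left hi] at h
  exact h


lemma area_eq (m n : ℕ) (hm : 0 < m) (hn : 0 < n) (hcop : Nat.Coprime m n)
    (P : List Bool) (hP : IsDyckWord m n P) :
    ((m : ℤ) + n) * (area m n P : ℤ) =
      ((m:ℤ)+n) * (∑ y ∈ Finset.range n, ((m:ℤ) * y / n))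
      + ((m:ℤ)+n) * (∑ x ∈ Finset.range m, (x:ℤ))
      - (m : ℤ) * (∑ i ∈ Finset.range (m+n), (i:ℤ))
      + ∑ r ∈ rankSet m n P, r := by
  classical
  obtain ⟨⟨hlen, hcnt⟩, hpos⟩ := hP
  have hcntf : P.count false = m := by
    have := List.count_true_add_count_false P; omega
  have hexT : ∀ y : ℕ, ∃ i, y < n →
      (i < P.length ∧ P.getD i false = true ∧ (P.take i).count true = y) := by
    intro y
    by_cases hy : y < n
    · obtain ⟨i, h⟩ := step_exists P true y (by rwa [hcnt]); exact ⟨i, fun _ => h⟩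
    · exact ⟨0, fun h => absurd h hy⟩
  choose idx hidx using hexT
  have hexF : ∀ x : ℕ, ∃ i, x < m →
      (i < P.length ∧ P.getD i false = false ∧ (P.take i).count false = x) := by
    intro x
    by_cases hx : x < m
    · obtain ⟨i, h⟩ := step_exists P false x (by rwa [hcntf]); exact ⟨i, fun _ => h⟩
    · exact ⟨0, fun h => absurd h hx⟩
  choose idx' hidx' using hexF
  -- ranks are nonnegative
  have hrank : ∀ i, i < P.length →
      (0:ℤ) ≤ (m:ℤ) * (P.take i).count true - n * (P.take i).count false := by
    intro i hi
    have hmem : (rankWalk (m:ℤ) n P 0).getD i 0 ∈ rankWalk (m:ℤ) n P 0 := by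
      rw [List.getD_eq_getElem _ _ (by rwa [rankWalk_length])]
      exact List.getElem_mem _
    have := hpos _ hmem
    rwa [rankWalk_getD _ _ _ _ i hi, zero_add] at this
  have hAK : ∀ y, y < n → (P.take (idx y)).count false ≤ m * y / n := by
    intro y hy
    obtain ⟨h1, h2, h3⟩ := hidx y hy
    have hr := hrank _ h1
    rw [h3] at hr
    have hr' : n * (P.take (idx y)).count false ≤ m * y := by exact_mod_cast
      (by linarith : ((n:ℤ) * ((P.take (idx y)).count false : ℤ)) ≤ (m:ℤ) * y)
    rw [Nat.le_div_iff_mul_le hn, Nat.mul_comm]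
    exact hr'
  have hKm : ∀ y, y < n → m * y / n < m := by
    intro y hy
    rw [Nat.div_lt_iff_lt_mul hn]
    exact mul_lt_mul_of_pos_left hy hm
  -- the key pointwise characterization
  have hpred : ∀ y, y < n → ∀ x : ℕ,
      ((n : ℤ) * ((x:ℤ) + 1) ≤ (m : ℤ) * (y:ℤ) ∧
        ∃ i < P.length, P.getD i false = true ∧
          (pathPt P i).2 = (y : ℤ) ∧ (pathPt P i).1 ≤ (x : ℤ))
      ↔ ((P.take (idx y)).count false ≤ x ∧ x < m * y / n) := by
    intro y hy x
    obtain ⟨h1, h2, h3⟩ := hidx y hy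
    constructor
    · rintro ⟨hdiag, i, hilen, hitrue, hiy, hix⟩
      rw [pathPt_snd P i hilen.le] at hiy
      rw [pathPt_fst P i hilen.le] at hix
      have hti : (P.take i).count true = y := by exact_mod_cast hiy
      have hieq : i = idx y := step_uniq P true hilen h1 hitrue h2 (by rw [hti, h3])
      subst hieq
      refine ⟨by exact_mod_cast hix, ?_⟩
      have hd : n * (x+1) ≤ m * y := by exact_mod_cast hdiag
      have : x + 1 ≤ m * y / n := by
        rw [Nat.le_div_iff_mul_le hn, Nat.mul_comm]; exact hd
      omega
    · rintro ⟨hax, hxK⟩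
      have hd : n * (x + 1) ≤ m * y := by
        have h4 : x + 1 ≤ m * y / n := hxK
        rw [Nat.le_div_iff_mul_le hn, Nat.mul_comm] at h4
        exact h4
      refine ⟨by exact_mod_cast hd, idx y, h1, h2, ?_, ?_⟩
      · rw [pathPt_snd P _ h1.le]; exact_mod_cast congrArg (Nat.cast : ℕ → ℤ) h3
      · rw [pathPt_fst P _ h1.le]; exact_mod_cast hax
  -- area as a sum over heights
  have harea : area m n P =
      ∑ y ∈ Finset.range n, (m * y / n - (P.take (idx y)).count false) := by
    rw [area, Finset.card_filter, Finset.sum_product, Finset.sum_comm]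
    refine Finset.sum_congr rfl fun y hy => ?_
    rw [Finset.mem_range] at hy
    have hstep : (∑ x ∈ Finset.range m,
        if ((n : ℤ) * ((x:ℤ) + 1) ≤ (m : ℤ) * (y:ℤ) ∧
          ∃ i < P.length, P.getD i false = true ∧
            (pathPt P i).2 = (y : ℤ) ∧ (pathPt P i).1 ≤ (x : ℤ)) then 1 else 0)
        = ∑ x ∈ Finset.range m,
          if ((P.take (idx y)).count false ≤ x ∧ x < m * y / n) then 1 else 0 := by
      refine Finset.sum_congr rfl fun x hx => ?_
      simp only [hpred y hy x]
    rw [hstep, ← Finset.card_filter]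
    have hKm' := hKm y hy
    have : (Finset.range m).filter
        (fun x => (P.take (idx y)).count false ≤ x ∧ x < m * y / n) =
        Finset.Ico ((P.take (idx y)).count false) (m * y / n) := by
      ext x
      simp only [Finset.mem_filter, Finset.mem_range, Finset.mem_Ico]
      omega
    rw [this, Nat.card_Ico]
  -- cast the area formula to ℤ
  have hcast : (area m n P : ℤ) =
      (∑ y ∈ Finset.range n, ((m:ℤ) * y / n))
      - ∑ y ∈ Finset.range n, ((P.take (idx y)).count false : ℤ) := by
    rw [harea, Nat.cast_sum, ← Finset.sum_sub_distrib]
    refine Finset.sum_congr rfl fun y hy => ?_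
    rw [Finset.mem_range] at hy
    rw [Nat.cast_sub (hAK y hy), Int.natCast_div, Nat.cast_mul]
  have hsumT : ∑ y ∈ Finset.range n, ((P.take (idx y)).count false : ℤ)
      = ∑ i ∈ (Finset.range P.length).filter (fun i => P.getD i false = true),
          ((P.take i).count false : ℤ) := by
    refine Finset.sum_nbij' (fun y => idx y) (fun i => (P.take i).count true)
      ?_ ?_ ?_ ?_ ?_
    · intro y hy
      rw [Finset.mem_range] at hy
      obtain ⟨h1, h2, _⟩ := hidx y hy
      rw [Finset.mem_filter, Finset.mem_range]
      exact ⟨h1, h2⟩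
    · intro i hi
      rw [Finset.mem_filter, Finset.mem_range] at hi
      obtain ⟨hi1, hi2⟩ := hi
      have := count_take_succ_self P true i hi1 hi2
      have := count_take_le P true (i+1)
      rw [Finset.mem_range]
      show (P.take i).count true < n
      omega
    · intro y hy
      rw [Finset.mem_range] at hy
      exact (hidx y hy).2.2
    · intro i hi
      rw [Finset.mem_filter, Finset.mem_range] at hi
      obtain ⟨hi1, hi2⟩ := hi
      have htn : (P.take i).count true < n := by
        have := count_take_succ_self P true i hi1 hi2
        have := count_take_le P true (i+1)
        omega
      obtain ⟨h1, h2, h3⟩ := hidx _ htn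
      exact step_uniq P true h1 hi1 h2 hi2 h3
    · intro y hy
      rfl
  have hsumF : ∑ i ∈ (Finset.range P.length).filter
        (fun i => ¬ (P.getD i false = true)), ((P.take i).count false : ℤ)
      = ∑ x ∈ Finset.range m, (x:ℤ) := by
    refine Finset.sum_nbij' (fun i => (P.take i).count false) (fun x => idx' x)
      ?_ ?_ ?_ ?_ ?_
    · intro i hi
      rw [Finset.mem_filter, Finset.mem_range] at hi
      obtain ⟨hi1, hi2⟩ := hi
      rw [Bool.not_eq_true] at hi2
      have := count_take_succ_self P false i hi1 hi2
      have := count_take_le P false (i+1)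
      rw [Finset.mem_range]
      show (P.take i).count false < m
      omega
    · intro x hx
      rw [Finset.mem_range] at hx
      obtain ⟨h1, h2, _⟩ := hidx' x hx
      rw [Finset.mem_filter, Finset.mem_range]
      exact ⟨h1, by rw [h2]; exact Bool.false_ne_true⟩
    · intro i hi
      rw [Finset.mem_filter, Finset.mem_range] at hi
      obtain ⟨hi1, hi2⟩ := hi
      rw [Bool.not_eq_true] at hi2
      have hfm : (P.take i).count false < m := by
        have := count_take_succ_self P false i hi1 hi2
        have := count_take_le P false (i+1)
        omega
      obtain ⟨h1, h2, h3⟩ := hidx' _ hfm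
      exact step_uniq P false h1 hi1 h2 hi2 h3
    · intro x hx
      rw [Finset.mem_range] at hx
      exact (hidx' x hx).2.2
    · intro i hi
      rfl
  have hsplit : (∑ i ∈ (Finset.range P.length).filter
        (fun i => P.getD i false = true), ((P.take i).count false : ℤ))
      + (∑ i ∈ (Finset.range P.length).filter
        (fun i => ¬ (P.getD i false = true)), ((P.take i).count false : ℤ))
      = ∑ i ∈ Finset.range P.length, ((P.take i).count false : ℤ) :=
    Finset.sum_filter_add_sum_filter_not _ _ _
  have hmulsum : ((m:ℤ)+n) * ∑ i ∈ Finset.range P.length, ((P.take i).count false : ℤ)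
      = (m:ℤ) * (∑ i ∈ Finset.range P.length, (i:ℤ))
        - ∑ i ∈ Finset.range P.length, (rankWalk (m:ℤ) n P 0).getD i 0 := by
    rw [Finset.mul_sum, Finset.mul_sum, ← Finset.sum_sub_distrib]
    refine Finset.sum_congr rfl fun i hi => ?_
    rw [Finset.mem_range] at hi
    rw [rankWalk_getD _ _ _ _ i hi]
    have h4 : ((P.take i).count true : ℤ) + (P.take i).count false = i := by
      exact_mod_cast count_take_add P i hi.le
    linear_combination ((m:ℤ)) * h4
  have hranksum : ∑ i ∈ Finset.range P.length, (rankWalk (m:ℤ) n P 0).getD i 0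
      = ∑ r ∈ rankSet m n P, r := by
    have hnd := rankWalk_nodup m n hcop P hlen
    have h1 : (rankSet m n P).sum id = (List.map id (rankWalk (m:ℤ) n P 0)).sum :=
      List.sum_toFinset id hnd
    rw [List.map_id] at h1
    have h2 : ∑ r ∈ rankSet m n P, r = (rankSet m n P).sum id := rfl
    rw [h2, h1, list_sum_eq, rankWalk_length]
  rw [← hlen]
  linear_combination ((m:ℤ)+n)*hcast - ((m:ℤ)+n)*hsumT + ((m:ℤ)+n)*hsumF
    - ((m:ℤ)+n)*hsplit - hmulsum + hranksum


/-- For an `(m,n)`-Dyck path `D` with rank set `R(D) ≠ R₀`, we have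
`area(D) = area(ℛ(D)) + 1`, where `ℛ(D)` is the `(m,n)`-Dyck path with rank set
`ℛ(R(D)) = (R(D) \ {max R(D)}) ∪ {max R(D) - m - n}`. -/
theorem area_rightOp (m n : ℕ) (hm : 0 < m) (hn : 0 < n) (hcop : Nat.Coprime m n)
    (P P' : List Bool) (hP : IsDyckWord m n P) (hne : rankSet m n P ≠ baseRankSet m n)
    (hP' : IsDyckWord m n P') (hRP' : rankSet m n P' = rightOp m n (rankSet m n P)) :
    area m n P = area m n P' + 1 := by
  have hlen : P.length = m + n := hP.1.1
  have hA := area_eq m n hm hn hcop P hP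
  have hA' := area_eq m n hm hn hcop P' hP'
  have hR0 : (0:ℤ) ∈ rankSet m n P := by
    cases P with
    | nil => rw [List.length_nil] at hlen; omega
    | cons b bs =>
      rw [rankSet, List.mem_toFinset, rankWalk]
      exact List.mem_cons_self
  have hne' : (rankSet m n P).Nonempty := ⟨0, hR0⟩
  have hidxmem : ∀ r ∈ rankSet m n P, ∃ i, i < P.length ∧
      (rankWalk (m:ℤ) n P 0).getD i 0 = r := by
    intro r hr
    rw [rankSet, List.mem_toFinset] at hr
    obtain ⟨i, hi, hieq⟩ := List.mem_iff_getElem.1 hr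
    refine ⟨i, by rwa [rankWalk_length] at hi, ?_⟩
    rw [List.getD_eq_getElem _ _ hi]
    exact hieq
  set M := (rankSet m n P).max' hne' with hMdef
  have hMmax : WithBot.unbotD 0 (rankSet m n P).max = M := by
    rw [← Finset.coe_max' hne']; rfl
  have hMR : M ∈ rankSet m n P := Finset.max'_mem _ _
  have hnotin : M - (m:ℤ) - n ∉ rankSet m n P := by
    intro hmem
    obtain ⟨i, hi, hieq⟩ := hidxmem M hMR
    obtain ⟨j, hj, hjeq⟩ := hidxmem _ hmem
    have hdvd : ((m:ℤ)+n) ∣ ((rankWalk (m:ℤ) n P 0).getD i 0 -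
        (rankWalk (m:ℤ) n P 0).getD j 0) := by
      rw [hieq, hjeq]
      exact ⟨1, by ring⟩
    have hij := rank_inj_mod m n hcop P hlen hi hj hdvd
    rw [hij, hjeq] at hieq
    have hnm : (0:ℤ) < (m:ℤ) + n := by positivity
    omega
  have hsum' : ∑ r ∈ rankSet m n P', r = (∑ r ∈ rankSet m n P, r) - ((m:ℤ)+n) := by
    rw [hRP', rightOp, hMmax]
    rw [Finset.sum_union (Finset.disjoint_singleton_right.2
      (fun hmem => hnotin (Finset.mem_of_mem_erase hmem)))]
    rw [Finset.sum_singleton]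
    have hsplit := Finset.add_sum_erase (rankSet m n P) (fun r => r) hMR
    push_cast
    linarith
  have key : ((m:ℤ)+n) * (area m n P : ℤ) = ((m:ℤ)+n) * ((area m n P' : ℤ) + 1) := by
    rw [hsum'] at hA'
    linear_combination hA - hA'
  have hpos : ((m:ℤ)+n) ≠ 0 := by positivity
  have := mul_left_cancel₀ hpos key
  exact_mod_cast this
end

section
/- Let (m,n) be a coprime pair of positive integers and let D be an (m,n)-Dyck path with sorted rank sequence 𝔯_1<…<𝔯_{m+n}. Then area(D) = (1/(m+n)) · ( Σ_{i=1}^{m+n} 𝔯_i − C(m+n,2) ), where C(m+n,2) = (m+n)(m+n−1)/2. -/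
/-! ### Auxiliary lemmas -/

def cnt (P : List Bool) (i : ℕ) : ℕ := (P.take i).count true

lemma cnt_succ (P : List Bool) (i : ℕ) :
    cnt P (i+1) = cnt P i + (if P.getD i false then 1 else 0) := by
  unfold cnt
  rcases lt_or_ge i P.length with h | h
  · have ht : P.take (i+1) = P.take i ++ [P[i]] := by
      rw [List.take_succ, List.getElem?_eq_getElem h]; rfl
    have hg : P.getD i false = P[i] := by
      simp [List.getD, List.getElem?_eq_getElem h]
    rw [ht, List.count_append, hg]
    cases hb : P[i] <;> simp
  · have ht : P.take (i+1) = P.take i := by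
      rw [List.take_of_length_le (by omega), List.take_of_length_le h]
    have hg : P.getD i false = false := by
      simp [List.getD, List.getElem?_eq_none h]
    rw [ht, hg]; simp

lemma cnt_sum (P : List Bool) (i : ℕ) :
    cnt P i = ∑ j ∈ Finset.range i, (if P.getD j false then 1 else 0) := by
  induction i with
  | zero => simp [cnt]
  | succ i ih => rw [Finset.sum_range_succ, cnt_succ, ih]

lemma cnt_mono (P : List Bool) : Monotone (cnt P) := by
  intro i j hij
  rw [cnt_sum, cnt_sum]
  exact Finset.sum_le_sum_of_subset (Finset.range_subset_range.2 hij)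

lemma cnt_le (P : List Bool) (i : ℕ) : cnt P i ≤ i := by
  calc cnt P i ≤ (P.take i).length := List.count_le_length
  _ ≤ i := by simp

lemma pathPt_eq_s14 (P : List Bool) (i : ℕ) :
    pathPt P i = ((i : ℤ) - cnt P i, (cnt P i : ℤ)) := by
  induction i with
  | zero => simp [pathPt, cnt]
  | succ i ih =>
    rw [pathPt, ih, cnt_succ]
    cases hb : P.getD i false <;> simp only [List.getD] at hb <;>
      simp [hb, Prod.ext_iff] <;> push_cast <;> ring

lemma rankWalk_eq (m n : ℤ) (P : List Bool) (r : ℤ) :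
    rankWalk m n P r = (List.range P.length).map
      (fun i => r + (m + n) * (cnt P i : ℤ) - n * i) := by
  induction P generalizing r with
  | nil => simp [rankWalk]
  | cons b bs ih =>
    rw [rankWalk, ih]
    simp only [List.length_cons, List.range_succ_eq_map, List.map_cons, List.map_map]
    congr 1
    · simp [cnt]
    · apply List.map_congr_left
      intro i _
      simp only [Function.comp]
      have hc : cnt (b :: bs) (i+1) = cnt bs i + (if b then 1 else 0) := by
        simp only [cnt, List.take_succ_cons, List.count_cons]
        cases b <;> simp
      rw [hc]
      cases b <;> simp <;> push_cast <;> ring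

lemma div_pair (m n y : ℕ) (hm : 0 < m) (hn : 0 < n) (h : Nat.Coprime m n)
    (h1 : 1 ≤ y) (h2 : y < n) : m * y / n + m * (n - y) / n = m - 1 := by
  set q := m * y / n with hq
  set r := m * y % n with hr
  have hmod : n * q + r = m * y := Nat.div_add_mod (m*y) n
  have hr1 : r < n := Nat.mod_lt _ hn
  have hr0 : r ≠ 0 := by
    intro h0
    have hd : n ∣ m * y := Nat.dvd_of_mod_eq_zero h0
    rw [Nat.mul_comm] at hd
    have : n ∣ y := (Nat.Coprime.dvd_of_dvd_mul_right (h.symm) hd)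
    exact absurd (Nat.le_of_dvd (by omega) this) (by omega)
  have hql : q < m := by
    have h3 : n * q < n * m := by
      calc n * q ≤ m * y := by omega
      _ < m * n := by exact (Nat.mul_lt_mul_left hm).mpr h2
      _ = n * m := Nat.mul_comm m n
    exact Nat.lt_of_mul_lt_mul_left h3
  have key : m * (n - y) = n * (m - q - 1) + (n - r) := by
    have hc1 : q ≤ m := hql.le
    have hc2 : 1 ≤ m - q := by omega
    zify [h2.le, hr1.le, hc1, hc2]
    push_cast at hmod ⊢
    nlinarith [hmod]
  have h2' : m * (n - y) / n = m - q - 1 := by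
    rw [key, Nat.add_comm, Nat.add_mul_div_left _ _ hn, Nat.div_eq_of_lt (by omega)]
    omega
  omega

lemma sum_floor (m n : ℕ) (hm : 0 < m) (hn : 0 < n) (h : Nat.Coprime m n) :
    2 * ∑ y ∈ Finset.range n, m * y / n = (m - 1) * (n - 1) := by
  have h0 : ∑ y ∈ Finset.range n, m * y / n = ∑ y ∈ Finset.Ico 1 n, m * y / n := by
    have hins : Finset.range n = insert 0 (Finset.Ico 1 n) := by
      ext x; simp [Finset.mem_range, Finset.mem_Ico]; omega
    rw [hins, Finset.sum_insert (by simp)]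
    simp
  have hrefl : ∑ y ∈ Finset.Ico 1 n, m * y / n
      = ∑ y ∈ Finset.Ico 1 n, m * (n - y) / n := by
    refine Finset.sum_nbij' (fun y => n - y) (fun y => n - y) ?_ ?_ ?_ ?_ ?_ <;>
        intro a ha <;> simp only [Finset.mem_Ico] at ha ⊢
    · omega
    · omega
    · omega
    · omega
    · have hh : n - (n - a) = a := by omega
      rw [hh]
  rw [h0, two_mul]
  nth_rewrite 2 [hrefl]
  rw [← Finset.sum_add_distrib]
  rw [Finset.sum_congr rfl (fun y hy => by
    simp [Finset.mem_Ico] at hy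
    exact div_pair m n y hm hn h hy.1 hy.2)]
  rw [Finset.sum_const, Nat.card_Ico, smul_eq_mul]
  ring_nf

lemma sum_sum_range (f : ℕ → ℤ) (L : ℕ) :
    ∑ i ∈ Finset.range L, ∑ j ∈ Finset.range i, f j
      = ∑ j ∈ Finset.range L, ((L:ℤ) - 1 - j) * f j := by
  have h1 : ∀ i ∈ Finset.range L, ∑ j ∈ Finset.range i, f j
      = ∑ j ∈ Finset.range L, if j < i then f j else 0 := by
    intro i hi
    rw [Finset.mem_range] at hi
    rw [← Finset.sum_filter]
    congr 1
    ext x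
    simp only [Finset.mem_filter, Finset.mem_range]
    omega
  rw [Finset.sum_congr rfl h1, Finset.sum_comm]
  apply Finset.sum_congr rfl
  intro j hj
  rw [Finset.mem_range] at hj
  rw [← Finset.sum_filter]
  have h2 : Finset.filter (fun i => j < i) (Finset.range L) = Finset.Ico (j+1) L := by
    ext x
    simp only [Finset.mem_filter, Finset.mem_range, Finset.mem_Ico]
    omega
  rw [h2, Finset.sum_const, Nat.card_Ico, nsmul_eq_mul]
  have h3 : ((L - (j+1) : ℕ) : ℤ) = (L:ℤ) - 1 - j := by
    push_cast [Nat.cast_sub (by omega : j + 1 ≤ L)]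
    ring
  rw [h3]


/-- For an `(m,n)`-Dyck path `D` with sorted rank sequence
`𝔯_1 < ⋯ < 𝔯_{m+n}`, we have
`area(D) = (1/(m+n)) · (∑_{i=1}^{m+n} 𝔯_i - C(m+n, 2))`. -/
theorem area_eq_sum_ranks (m n : ℕ) (hm : 0 < m) (hn : 0 < n)
    (hcop : Nat.Coprime m n) (P : List Bool) (hP : IsDyckWord m n P) :
    ((m : ℤ) + n) * area m n P =
      (∑ r ∈ rankSet m n P, r) - ((m + n).choose 2 : ℤ) := by
  classical
  obtain ⟨⟨hlen, hcount⟩, hpos⟩ := hP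
  have hLpos : 0 < m + n := by omega
  have htakeL : P.take (m+n) = P := by rw [← hlen]; exact List.take_length
  have hcntL : cnt P (m+n) = n := by unfold cnt; rw [htakeL]; exact hcount
  set T := (Finset.range (m+n)).filter (fun i => P.getD i false = true) with hTdef
  have memT : ∀ i : ℕ, i ∈ T ↔ i < m+n ∧ P.getD i false = true := by
    intro i; simp [hTdef]
  have hcnt_lt : ∀ i ∈ T, cnt P i < n := by
    intro i hi
    obtain ⟨hiL, hit⟩ := (memT i).1 hi
    have h1 : cnt P (i+1) = cnt P i + 1 := by rw [cnt_succ, if_pos hit]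
    have h2 : cnt P (i+1) ≤ n := by rw [← hcntL]; exact cnt_mono P (by omega)
    omega
  have hcnt_inj : ∀ i ∈ T, ∀ j ∈ T, cnt P i = cnt P j → i = j := by
    have key : ∀ i ∈ T, ∀ j ∈ T, i < j → cnt P i < cnt P j := by
      intro i hi j hj hij
      obtain ⟨hiL, hit⟩ := (memT i).1 hi
      have h1 : cnt P (i+1) = cnt P i + 1 := by rw [cnt_succ, if_pos hit]
      have h2 : cnt P (i+1) ≤ cnt P j := cnt_mono P (by omega)
      omega
    intro i hi j hj hij
    rcases lt_trichotomy i j with h | h | h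
    · exact absurd hij (Nat.ne_of_lt (key i hi j hj h))
    · exact h
    · exact absurd hij.symm (Nat.ne_of_lt (key j hj i hi h))
  have hcardT : T.card = n := by
    rw [hTdef, Finset.card_filter, ← cnt_sum, hcntL]
  have himg : T.image (cnt P) = Finset.range n := by
    apply Finset.eq_of_subset_of_card_le
    · intro y hy
      simp only [Finset.mem_image] at hy
      obtain ⟨i, hi, rfl⟩ := hy
      exact Finset.mem_range.2 (hcnt_lt i hi)
    · rw [Finset.card_range,
        Finset.card_image_of_injOn (fun x hx y hy h => hcnt_inj x hx y hy h), hcardT]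
  set g : ℕ → ℤ := fun i => ((m:ℤ)+n) * (cnt P i) - n * i with hgdef
  have hwalk : rankWalk (m:ℤ) (n:ℤ) P 0 = (List.range (m+n)).map g := by
    rw [rankWalk_eq, hlen]
    exact List.map_congr_left (fun i _ => by simp [hgdef])
  have hnodup : (rankWalk (m:ℤ) (n:ℤ) P 0).Nodup := by
    rw [hwalk]
    refine List.Nodup.map_on ?_ ((List.nodup_range (n := m+n)))
    intro i hi j hj hg
    rw [List.mem_range] at hi hj
    simp only [hgdef] at hg
    have h1 : ((n:ℤ)) * ((i:ℤ) - j) = ((m:ℤ)+n) * ((cnt P i:ℤ) - cnt P j) := by ring_nf; linarith [hg]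
    have hcop2 : Nat.Coprime (m+n) n := by simpa using Nat.coprime_add_self_left.mpr hcop
    have hcopZ : IsCoprime (((m+n):ℕ):ℤ) ((n:ℕ):ℤ) := Nat.isCoprime_iff_coprime.mpr hcop2
    have hdvd : (((m+n):ℕ):ℤ) ∣ ((i:ℤ) - j) := by
      refine hcopZ.dvd_of_dvd_mul_left ?_
      exact ⟨(cnt P i:ℤ) - cnt P j, by push_cast; linarith [h1]⟩
    have habs : |(i:ℤ) - j| < (((m+n):ℕ):ℤ) := by
      rw [abs_sub_lt_iff]
      constructor <;> push_cast <;> omega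
    have := Int.eq_zero_of_abs_lt_dvd hdvd habs
    omega
  have hsum1 : (∑ r ∈ rankSet m n P, r) = ∑ i ∈ Finset.range (m+n), g i := by
    have e1 : (∑ r ∈ rankSet m n P, r) = ((rankWalk (m:ℤ) (n:ℤ) P 0).map id).sum := by
      rw [rankSet, ← List.sum_toFinset _ hnodup]; rfl
    rw [e1, List.map_id, hwalk]
    rw [show Finset.range (m+n) = (List.range (m+n)).toFinset from by ext x; simp]
    rw [List.sum_toFinset _ ((List.nodup_range (n := m+n)))]
  set S : ℤ := ∑ i ∈ T, (i:ℤ) with hSdef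
  set C2 : ℤ := ∑ i ∈ T, (cnt P i : ℤ) with hC2def
  set I : ℤ := ∑ i ∈ Finset.range (m+n), (i:ℤ) with hIdef
  have hsum2 : ∑ i ∈ Finset.range (m+n), g i
      = ((m:ℤ)+n) * (∑ i ∈ Finset.range (m+n), (cnt P i : ℤ)) - n * I := by
    simp only [hgdef]
    rw [Finset.sum_sub_distrib, ← Finset.mul_sum, ← Finset.mul_sum]
  have hC : (∑ i ∈ Finset.range (m+n), (cnt P i : ℤ)) = n * (((m:ℤ)+n) - 1) - S := by
    have h1 : ∀ i ∈ Finset.range (m+n), (cnt P i : ℤ)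
        = ∑ j ∈ Finset.range i, (if P.getD j false then (1:ℤ) else 0) := by
      intro i _
      rw [cnt_sum]
      push_cast
      exact Finset.sum_congr rfl (fun j _ => by split <;> simp)
    rw [Finset.sum_congr rfl h1, sum_sum_range]
    have h2 : ∀ j ∈ Finset.range (m+n),
        (((m+n:ℕ):ℤ) - 1 - j) * (if P.getD j false then (1:ℤ) else 0)
        = if P.getD j false = true then (((m+n:ℕ):ℤ) - 1 - j) else 0 := by
      intro j _; split <;> simp
    rw [Finset.sum_congr rfl h2, ← Finset.sum_filter, ← hTdef]
    rw [Finset.sum_sub_distrib, Finset.sum_sub_distrib, Finset.sum_const, Finset.sum_const, hcardT]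
    push_cast
    ring
  have hI2 : 2 * I = ((m:ℤ)+n) * (((m:ℤ)+n) - 1) := by
    have h1 := Finset.sum_range_id_mul_two (m+n)
    have h2 : ((∑ i ∈ Finset.range (m+n), i : ℕ) : ℤ) = I := by
      rw [hIdef]; push_cast; rfl
    have h3 := congrArg (fun k : ℕ => (k:ℤ)) h1
    rw [Nat.cast_mul, Nat.cast_mul, h2, Nat.cast_sub hLpos] at h3
    push_cast at h3 ⊢
    linarith
  have hchoose : 2 * (((m+n).choose 2 : ℕ) : ℤ) = ((m:ℤ)+n) * (((m:ℤ)+n) - 1) := by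
    have he : 2 ∣ (m+n) * (m+n-1) := by
      have h4 := Nat.even_mul_succ_self (m+n-1)
      rw [Nat.sub_add_cancel hLpos] at h4
      rw [Nat.mul_comm]
      exact h4.two_dvd
    have h1 : 2 * ((m+n).choose 2) = (m+n) * (m+n-1) := by
      rw [Nat.choose_two_right]
      exact Nat.mul_div_cancel' he
    have h3 := congrArg (fun k : ℕ => (k:ℤ)) h1
    rw [Nat.cast_mul, Nat.cast_mul, Nat.cast_sub hLpos] at h3
    push_cast at h3 ⊢
    linarith
  -- ### the area computation ###
  have haF : ∀ i ∈ T, (i - cnt P i) * n ≤ m * cnt P i := by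
    intro i hi
    obtain ⟨hiL, hit⟩ := (memT i).1 hi
    have hrank : 0 ≤ g i := by
      apply hpos
      rw [hwalk]
      exact List.mem_map_of_mem (f := g) (List.mem_range.2 hiL)
    simp only [hgdef] at hrank
    have hyi : cnt P i ≤ i := cnt_le P i
    zify [hyi]
    nlinarith [hrank]
  have haF' : ∀ i ∈ T, i - cnt P i ≤ m * cnt P i / n :=
    fun i hi => (Nat.le_div_iff_mul_le hn).2 (haF i hi)
  have harea0 : area m n P = ∑ y ∈ Finset.range n, ∑ x ∈ Finset.range m,
      if ((n : ℤ) * (x + 1) ≤ (m : ℤ) * y ∧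
        ∃ i < P.length, P.getD i false = true ∧
          (pathPt P i).2 = (y : ℤ) ∧ (pathPt P i).1 ≤ (x : ℤ)) then 1 else 0 := by
    rw [area, Finset.card_filter, Finset.sum_product_right]
  have hinner : ∀ i ∈ T, (∑ x ∈ Finset.range m,
      if ((n : ℤ) * (x + 1) ≤ (m : ℤ) * (cnt P i) ∧
        ∃ i' < P.length, P.getD i' false = true ∧
          (pathPt P i').2 = ((cnt P i : ℕ) : ℤ) ∧ (pathPt P i').1 ≤ (x : ℤ)) then 1 else 0)
      = m * cnt P i / n - (i - cnt P i) := by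
    intro i hi
    obtain ⟨hiL, hit⟩ := (memT i).1 hi
    have hylt : cnt P i < n := hcnt_lt i hi
    have hyi : cnt P i ≤ i := cnt_le P i
    have hFm : m * cnt P i / n < m := by
      rw [Nat.div_lt_iff_lt_mul hn]
      exact (Nat.mul_lt_mul_left hm).mpr hylt
    have hiff : ∀ x : ℕ, x < m → (((n : ℤ) * (x + 1) ≤ (m : ℤ) * (cnt P i) ∧
        ∃ i' < P.length, P.getD i' false = true ∧
          (pathPt P i').2 = ((cnt P i : ℕ) : ℤ) ∧ (pathPt P i').1 ≤ (x : ℤ))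
        ↔ (i - cnt P i ≤ x ∧ x < m * cnt P i / n)) := by
      intro x hxm
      constructor
      · rintro ⟨hineq, i', hi'L, hi't, hco2, hco1⟩
        rw [pathPt_eq_s14] at hco2 hco1
        simp only at hco2 hco1
        have hcnteq : cnt P i' = cnt P i := by exact_mod_cast hco2
        have hi'T : i' ∈ T := (memT i').2 ⟨by omega, hi't⟩
        have hii : i' = i := hcnt_inj i' hi'T i hi hcnteq
        rw [hii] at hco1
        refine ⟨by omega, ?_⟩
        have hnat : n * (x + 1) ≤ m * cnt P i := by exact_mod_cast hineq
        rw [Nat.mul_comm] at hnat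
        have h5 := (Nat.le_div_iff_mul_le hn).2 hnat
        omega
      · rintro ⟨h1, h2⟩
        refine ⟨?_, i, by omega, hit, by rw [pathPt_eq_s14], ?_⟩
        · have h3 : (x + 1) * n ≤ m * cnt P i := (Nat.le_div_iff_mul_le hn).1 (by omega)
          rw [Nat.mul_comm] at h3
          exact_mod_cast h3
        · rw [pathPt_eq_s14]
          simp only
          omega
    calc (∑ x ∈ Finset.range m,
        if ((n : ℤ) * (x + 1) ≤ (m : ℤ) * (cnt P i) ∧
          ∃ i' < P.length, P.getD i' false = true ∧
            (pathPt P i').2 = ((cnt P i : ℕ) : ℤ) ∧ (pathPt P i').1 ≤ (x : ℤ)) then 1 else 0)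
        = ∑ x ∈ Finset.range m,
            if (i - cnt P i ≤ x ∧ x < m * cnt P i / n) then 1 else 0 :=
          Finset.sum_congr rfl (fun x hx => if_congr (hiff x (Finset.mem_range.1 hx)) rfl rfl)
      _ = ((Finset.range m).filter (fun x => i - cnt P i ≤ x ∧ x < m * cnt P i / n)).card :=
          (Finset.card_filter _ _).symm
      _ = (Finset.Ico (i - cnt P i) (m * cnt P i / n)).card := by
          congr 1
          ext x
          simp only [Finset.mem_filter, Finset.mem_range, Finset.mem_Ico]
          omega
      _ = m * cnt P i / n - (i - cnt P i) := Nat.card_Ico _ _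
  have hareaN : area m n P = ∑ i ∈ T, (m * cnt P i / n - (i - cnt P i)) := by
    rw [harea0, ← himg, Finset.sum_image hcnt_inj]
    exact Finset.sum_congr rfl hinner
  have hareaZ : (area m n P : ℤ)
      = (∑ i ∈ T, ((m * cnt P i / n : ℕ) : ℤ)) - (S - C2) := by
    rw [hareaN, Nat.cast_sum]
    rw [Finset.sum_congr rfl (fun i hi => by
      rw [Nat.cast_sub (haF' i hi), Nat.cast_sub (cnt_le P i)])]
    rw [Finset.sum_sub_distrib, Finset.sum_sub_distrib, hSdef, hC2def]
  have hG : (∑ i ∈ T, ((m * cnt P i / n : ℕ) : ℤ))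
      = ∑ y ∈ Finset.range n, ((m * y / n : ℕ) : ℤ) := by
    rw [← himg, Finset.sum_image hcnt_inj]
  have hG2 : 2 * (∑ y ∈ Finset.range n, ((m * y / n : ℕ) : ℤ))
      = ((m:ℤ) - 1) * ((n:ℤ) - 1) := by
    have h1 := congrArg (fun k : ℕ => (k:ℤ)) (sum_floor m n hm hn hcop)
    rw [Nat.cast_mul, Nat.cast_mul, Nat.cast_sub hm, Nat.cast_sub hn] at h1
    push_cast at h1 ⊢
    linarith
  have hC2v : 2 * C2 = (n:ℤ) * ((n:ℤ) - 1) := by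
    have h1 : C2 = ∑ y ∈ Finset.range n, (y:ℤ) := by
      rw [hC2def, ← himg, Finset.sum_image hcnt_inj]
    have h2 := Finset.sum_range_id_mul_two n
    have h3 := congrArg (fun k : ℕ => (k:ℤ)) h2
    rw [Nat.cast_mul, Nat.cast_mul, Nat.cast_sub hn] at h3
    have h4 : ((∑ i ∈ Finset.range n, i : ℕ) : ℤ) = ∑ y ∈ Finset.range n, (y:ℤ) := by
      push_cast; rfl
    rw [h4] at h3
    push_cast at h3 ⊢
    rw [h1]
    linarith
  rw [hsum1, hsum2, hC, hareaZ, hG]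
  refine mul_left_cancel₀ (two_ne_zero : (2:ℤ) ≠ 0) ?_
  linear_combination ((m:ℤ)+n) * hG2 + ((m:ℤ)+n) * hC2v + (n:ℤ) * hI2 + hchoose
end

section
/- Let (m,n) be a coprime pair of positive integers, let R ≠ R_0 = {0,1,…,m+n−1} be the rank set of an (m,n)-Dyck path with sorted sequence 𝔯_1<…<𝔯_{m+n} and SW-sequence σ, let s = σ^{-1}(W_1) be the position of the first W in σ, and let 𝔯^L be the sorted sequence of ℒ(R). Then n − 𝔯_2 equals the (s−1)-st smallest element of ℒ(R), i.e., 𝔯_2 = n − 𝔯^L_{s−1}, and R can be recovered from (ℒ(R), σ) by R = ((𝔯_2 + ℒ(R)) ∖ {m+n}) ∪ {0}, where 𝔯_2 + ℒ(R) = {𝔯_2 + x : x ∈ ℒ(R)}. -/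
/-- The SW-sequence of a (Dyck path) rank set `R`, reading the sorted ranks from left
to right: `true` (= the letter `S`) at rank `r` iff `r + m ∈ R`, i.e. `r ∈ S(R) = R ∩ (R - m)`;
otherwise `false` (= the letter `W`). -/
def swSeq (m : ℕ) (R : Finset ℤ) : List Bool :=
  (R.sort (· ≤ ·)).map (fun r => decide (r + (m : ℤ) ∈ R))

/-- The 1-based position of the `j`-th (1-based) occurrence of the letter `b` in the
word `w`; e.g. `nthPos w false j` is the position `σ⁻¹(W_j)` of the `j`-th `W`. -/
def nthPos (w : List Bool) (b : Bool) (j : ℕ) : ℕ :=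
  ((List.range w.length).filter (fun p => w.getD p (!b) == b)).getD (j - 1) 0 + 1

/-- `𝔯_i`, the `i`-th smallest element of `R` (1-based). -/
def sortedRank (R : Finset ℤ) (i : ℕ) : ℤ :=
  (R.sort (· ≤ ·)).getD (i - 1) 0

/-- The left operation `ℒ(R) = ((R \ {0}) ∪ {m+n}) - min (R \ {0})`. -/
def leftOp (m n : ℕ) (R : Finset ℤ) : Finset ℤ :=
  ((R.erase 0) ∪ {((m : ℤ) + n)}).image
    (fun r => r - WithTop.untopD 0 (R.erase 0).min)

namespace Recover

lemma rankWalk_length (m n : ℤ) : ∀ (P : List Bool) (c : ℤ),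
    (rankWalk m n P c).length = P.length
  | [], _ => rfl
  | b :: bs, c => by simp [rankWalk, rankWalk_length m n bs]

def walkEnd (m n : ℤ) (P : List Bool) (c : ℤ) : ℤ :=
  c + m * P.count true - n * P.count false

lemma walkEnd_cons (m n : ℤ) (b : Bool) (bs : List Bool) (c : ℤ) :
    walkEnd m n (b :: bs) c = walkEnd m n bs (c + if b then m else -n) := by
  cases b <;> simp [walkEnd, List.count_cons] <;> push_cast <;> ring

lemma head_mem (m n : ℤ) (P : List Bool) (c : ℤ) (h : P ≠ []) : c ∈ rankWalk m n P c := by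
  cases P with
  | nil => exact absurd rfl h
  | cons b bs => simp [rankWalk]

lemma chain (m n : ℤ) : ∀ (P : List Bool) (c : ℤ), ∀ r ∈ rankWalk m n P c,
    r + m ∈ rankWalk m n P c ∨ r - n ∈ rankWalk m n P c ∨
    r + m = walkEnd m n P c ∨ r - n = walkEnd m n P c
  | [], c => by simp [rankWalk]
  | b :: bs, c => by
    intro r hr
    rw [rankWalk] at hr ⊢
    rcases List.mem_cons.1 hr with h | h
    · subst h
      rcases eq_or_ne bs [] with hbs | hbs
      · subst hbs
        cases b
        · right; right; right; simp [walkEnd_cons, walkEnd]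
        · right; right; left; simp [walkEnd_cons, walkEnd]
      · have hmem := head_mem m n bs (r + if b then m else -n) hbs
        cases b
        · right; left
          exact List.mem_cons_of_mem _ (by simpa [sub_eq_add_neg] using hmem)
        · left
          exact List.mem_cons_of_mem _ (by simpa using hmem)
    · rcases chain m n bs (c + if b then m else -n) r h with h' | h' | h' | h'
      · exact Or.inl (List.mem_cons_of_mem _ h')
      · exact Or.inr (Or.inl (List.mem_cons_of_mem _ h'))
      · exact Or.inr (Or.inr (Or.inl (by rw [walkEnd_cons]; exact h')))
      · exact Or.inr (Or.inr (Or.inr (by rw [walkEnd_cons]; exact h')))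

lemma end_pred (m n : ℤ) : ∀ (P : List Bool) (c : ℤ), P ≠ [] →
    ∃ r ∈ rankWalk m n P c, r + m = walkEnd m n P c ∨ r - n = walkEnd m n P c
  | [], _, h => absurd rfl h
  | b :: bs, c, _ => by
    rcases eq_or_ne bs [] with hbs | hbs
    · subst hbs
      refine ⟨c, by simp [rankWalk], ?_⟩
      cases b
      · right; simp [walkEnd_cons, walkEnd]
      · left; simp [walkEnd_cons, walkEnd]
    · obtain ⟨r, hr, h⟩ := end_pred m n bs (c + if b then m else -n) hbs
      exact ⟨r, List.mem_cons_of_mem _ hr, by rwa [walkEnd_cons]⟩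

lemma rankWalk_mod (m n : ℤ) : ∀ (P : List Bool) (c : ℤ) (i : ℕ), i < P.length →
    (m + n) ∣ ((rankWalk m n P c).getD i 0 - (c + m * i))
  | [], _, i, h => by simp at h
  | b :: bs, c, 0, _ => by simp [rankWalk]
  | b :: bs, c, i+1, h => by
    have h1 := rankWalk_mod m n bs (c + if b then m else -n) i (by simpa using h)
    have h2 : (m + n) ∣ ((c + if b then m else -n) + m * i) - (c + m * (i + 1)) := by
      cases b
      · exact ⟨-1, by push_cast; ring⟩
      · exact ⟨0, by push_cast; simp; ring⟩
    rw [rankWalk, List.getD_cons_succ]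
    have := dvd_add h1 h2
    convert this using 1
    · rfl
    push_cast
    ring


lemma countP_sort (T : Finset ℤ) (p : ℤ → Bool) :
    (T.sort (· ≤ ·)).countP p = (T.filter (p ·)).card := by
  rw [List.countP_eq_length_filter,
      ← List.toFinset_card_of_nodup ((T.sort_nodup (· ≤ ·)).filter p),
      List.toFinset_filter, Finset.sort_toFinset]

lemma count_lt_getElem {l : List ℤ} (hl : l.Pairwise (· < ·)) (i : ℕ) (hi : i < l.length) :
    l.countP (fun x => decide (x < l[i])) = i := by
  set p : ℤ → Bool := fun x => decide (x < l[i]) with hp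
  have hpw : l.Pairwise (· < ·) := hl
  rw [List.pairwise_iff_get] at hpw
  conv_lhs => rw [← List.take_append_drop i l]
  rw [List.countP_append]
  have h1 : (l.take i).countP p = (l.take i).length := by
    rw [List.countP_eq_length]
    intro a ha
    obtain ⟨j, hj, hja⟩ := List.mem_take_iff_getElem.1 ha
    have hj' : j < i := lt_of_lt_of_le hj inf_le_left
    have := hpw ⟨j, by omega⟩ ⟨i, hi⟩ hj'
    simp only [List.get_eq_getElem] at this
    simp [hp, ← hja, this]
  have h2 : (l.drop i).countP p = 0 := by
    rw [List.countP_eq_zero]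
    intro a ha
    obtain ⟨j, hj, hja⟩ := List.mem_drop_iff_getElem.1 ha
    rcases Nat.eq_zero_or_pos j with rfl | hj0
    · simp only [Nat.add_zero] at hja
      simp [hp, ← hja]
    · have := hpw ⟨i, hi⟩ ⟨i + j, by omega⟩ (by simp; omega)
      simp only [List.get_eq_getElem] at this
      rw [← hja] at this
      simp only [hp, ← hja, decide_eq_true_eq, not_lt]
      exact le_of_lt this
  rw [h1, h2, List.length_take]
  omega

lemma sorted_getD (T : Finset ℤ) (a : ℤ) (j : ℕ) (ha : a ∈ T)
    (hj : (T.filter (· < a)).card = j) : (T.sort (· ≤ ·)).getD j 0 = a := by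
  set l := T.sort (· ≤ ·) with hldef
  have hal : a ∈ l := (Finset.mem_sort _).2 ha
  obtain ⟨i, hi, hia⟩ := List.mem_iff_getElem.1 hal
  have hcnt : l.countP (fun x => decide (x < a)) = (T.filter (· < a)).card := by
    rw [hldef, countP_sort]
    simp
  have hij : i = j := by
    rw [← hj, ← hcnt, ← hia]
    exact (count_lt_getElem (Finset.sortedLT_sort T).pairwise i hi).symm
  subst hij
  rw [List.getD_eq_getElem _ _ hi, hia]

lemma sorted_lt_of_lt {T : Finset ℤ} {i j : ℕ} (hij : i < j) (hj : j < T.card) :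
    (T.sort (· ≤ ·)).getD i 0 < (T.sort (· ≤ ·)).getD j 0 := by
  have hl : (T.sort (· ≤ ·)).Pairwise (· < ·) := (Finset.sortedLT_sort T).pairwise
  rw [List.pairwise_iff_get] at hl
  have hlen : (T.sort (· ≤ ·)).length = T.card := Finset.length_sort _
  have := hl ⟨i, by omega⟩ ⟨j, by omega⟩ hij
  simp only [List.get_eq_getElem] at this
  rwa [List.getD_eq_getElem _ _ (by omega), List.getD_eq_getElem _ _ (by omega)]

lemma mem_sort_getD {T : Finset ℤ} {i : ℕ} (hi : i < T.card) :
    (T.sort (· ≤ ·)).getD i 0 ∈ T := by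
  have hlen : (T.sort (· ≤ ·)).length = T.card := Finset.length_sort _
  rw [List.getD_eq_getElem _ _ (by omega)]
  exact (Finset.mem_sort _).1 (List.getElem_mem _)

lemma first_false (w : List Bool) (k : ℕ) (hk : k < w.length)
    (h1 : ∀ p < k, w.getD p true = true) (h2 : w.getD k true = false) :
    nthPos w false 1 = k + 1 := by
  unfold nthPos
  congr 1
  have hlen : w.length = k + (w.length - k - 1 + 1) := by omega
  rw [hlen, List.range_add, List.filter_append, List.range_succ_eq_map, List.map_cons]
  have e1 : (List.range k).filter (fun p => w.getD p (!false) == false) = [] := by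
    apply List.filter_eq_nil_iff.2
    intro p hp
    have := h1 p (List.mem_range.1 hp)
    simpa [List.getD] using this
  rw [e1, List.nil_append, List.filter_cons]
  rw [if_pos (by simpa [List.getD] using h2)]
  rfl

end Recover

/-- Let `R ≠ R₀` be the rank set of an `(m,n)`-Dyck path with sorted
sequence `𝔯_1 < ⋯ < 𝔯_{m+n}` and SW-sequence `σ`, let `s = σ⁻¹(W_1)` and let `𝔯^L` be
the sorted sequence of `ℒ(R)`.  Then `𝔯_2 = n - 𝔯^L_{s-1}`, and `R` can be recovered
from `(ℒ(R), σ)` by `R = ((𝔯_2 + ℒ(R)) \ {m+n}) ∪ {0}`. -/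
theorem recover_from_leftOp (m n : ℕ) (hm : 0 < m) (hn : 0 < n)
    (hcop : Nat.Coprime m n) (R : Finset ℤ) (hR : IsDyckRankSet m n R)
    (hne : R ≠ baseRankSet m n) :
    sortedRank R 2 = (n : ℤ) - sortedRank (leftOp m n R) (nthPos (swSeq m R) false 1 - 1) ∧
    R = insert (0 : ℤ)
      (((leftOp m n R).image (fun x => sortedRank R 2 + x)).erase ((m : ℤ) + n)) := by
  obtain ⟨P, ⟨⟨hlenP, hct⟩, hnn⟩, hrsR⟩ := hR
  have hPne : P ≠ [] := by
    intro h; rw [h] at hlenP; simp at hlenP; omega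
  have hmemR : ∀ r : ℤ, r ∈ R ↔ r ∈ rankWalk (m:ℤ) (n:ℤ) P 0 := by
    intro r
    rw [← hrsR, rankSet, List.mem_toFinset]
  have hnonneg : ∀ r ∈ R, (0:ℤ) ≤ r := fun r hr => hnn r ((hmemR r).1 hr)
  have h0R : (0:ℤ) ∈ R := (hmemR 0).2 (Recover.head_mem _ _ _ _ hPne)
  have hmpos : (0:ℤ) < m := by exact_mod_cast hm
  have hnpos : (0:ℤ) < n := by exact_mod_cast hn
  have hcf : P.count false = m := by
    have h := List.length_eq_countP_add_countP (· == true) (l := P)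
    have h1 : P.countP (· == true) = P.count true := rfl
    have h2 : P.countP (fun a => ¬(a == true)) = P.count false := by
      apply List.countP_congr
      intro a _
      cases a <;> simp
    omega
  have hEnd : Recover.walkEnd (m:ℤ) (n:ℤ) P 0 = 0 := by
    rw [Recover.walkEnd, hct, hcf]
    push_cast
    ring
  have hstep : ∀ r ∈ R, r + m ∈ R ∨ r - n ∈ R := by
    intro r hr
    have hr0 := hnonneg r hr
    rcases Recover.chain (m:ℤ) (n:ℤ) P 0 r ((hmemR r).1 hr) with h|h|h|h
    · exact Or.inl ((hmemR _).2 h)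
    · exact Or.inr ((hmemR _).2 h)
    · rw [hEnd] at h; exfalso; linarith
    · rw [hEnd] at h
      refine Or.inr ?_
      rw [h]
      exact h0R
  have hmR : (m:ℤ) ∈ R := by
    rcases hstep 0 h0R with h|h
    · simpa using h
    · exfalso; have := hnonneg _ h; linarith
  have hnR : (n:ℤ) ∈ R := by
    obtain ⟨r, hr, h⟩ := Recover.end_pred (m:ℤ) (n:ℤ) P 0 hPne
    rw [hEnd] at h
    have hrR := (hmemR r).2 hr
    have hr0 := hnonneg r hrR
    rcases h with h | h
    · exfalso; linarith
    · have : r = (n:ℤ) := by linarith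
      rwa [← this]
  have hmnR : ((m:ℤ) + n) ∉ R := by
    intro hmem
    obtain ⟨i, hi, hie⟩ := List.mem_iff_getElem.1 ((hmemR _).1 hmem)
    have hilen : i < P.length := by rwa [Recover.rankWalk_length] at hi
    have hdvd := Recover.rankWalk_mod (m:ℤ) (n:ℤ) P 0 i hilen
    rw [List.getD_eq_getElem _ _ hi, hie] at hdvd
    have h2 : ((m:ℤ) + n) ∣ (m:ℤ) * i := by
      have h3 := dvd_sub (dvd_refl ((m:ℤ) + n)) hdvd
      have h4 : (m:ℤ) + n - ((m:ℤ) + n - (0 + m * i)) = (m:ℤ) * i := by ring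
      rwa [h4] at h3
    have h3 : (m + n) ∣ m * i := by exact_mod_cast h2
    have hco : (m + n).Coprime m := by
      have := Nat.Coprime.symm hcop
      simpa [Nat.add_comm m n] using (Nat.coprime_add_self_left (m := n) (n := m)).2 this
    have h4 : (m + n) ∣ i := hco.dvd_of_dvd_mul_left h3
    have hi0 : i = 0 := by
      rcases Nat.eq_zero_or_pos i with h | h
      · exact h
      · exfalso
        have := Nat.le_of_dvd h h4
        omega
    subst hi0
    cases P with
    | nil => exact hPne rfl
    | cons b bs =>
      simp [rankWalk] at hie
      omega
  -- the second-smallest element e = 𝔯₂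
  have hne0 : (R.erase 0).Nonempty := ⟨m, Finset.mem_erase.2 ⟨by positivity, hmR⟩⟩
  set e := (R.erase 0).min' hne0 with hedef
  have hemem := Finset.min'_mem _ hne0
  have heR : e ∈ R := Finset.mem_of_mem_erase hemem
  have hene : e ≠ 0 := (Finset.mem_erase.1 hemem).1
  have hepos : 0 < e := lt_of_le_of_ne (hnonneg e heR) (Ne.symm hene)
  have hmin : WithTop.untopD 0 (R.erase 0).min = e := by
    rw [← Finset.coe_min' hne0, WithTop.untopD_coe]
  have hr2 : sortedRank R 2 = e := by
    show (R.sort (· ≤ ·)).getD (2-1) 0 = e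
    apply Recover.sorted_getD R e 1 heR
    have : R.filter (· < e) = {0} := by
      ext x
      simp only [Finset.mem_filter, Finset.mem_singleton]
      constructor
      · rintro ⟨hxR, hxe⟩
        by_contra hx0
        exact absurd (Finset.min'_le _ x (Finset.mem_erase.2 ⟨hx0, hxR⟩)) (not_le.2 hxe)
      · rintro rfl
        exact ⟨h0R, hepos⟩
    rw [this, Finset.card_singleton]
  set k := (R.filter (· < (n:ℤ))).card with hkdef
  have h0f : (0:ℤ) ∈ R.filter (· < (n:ℤ)) := Finset.mem_filter.2 ⟨h0R, hnpos⟩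
  have hk1 : 1 ≤ k := Finset.card_pos.2 ⟨0, h0f⟩
  have hklt : k < R.card := by
    apply Finset.card_lt_card
    rw [Finset.ssubset_iff_of_subset (Finset.filter_subset _ _)]
    exact ⟨n, hnR, by simp⟩
  have hsortlen : (R.sort (· ≤ ·)).length = R.card := Finset.length_sort _
  have hwlen : (swSeq m R).length = R.card := by
    rw [swSeq, List.length_map, hsortlen]
  have hsort_k : (R.sort (· ≤ ·)).getD k 0 = n := Recover.sorted_getD R n k hnR hkdef.symm
  have hw : ∀ p, p < R.card →
      (swSeq m R).getD p true = decide ((R.sort (· ≤ ·)).getD p 0 + m ∈ R) := by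
    intro p hp
    rw [swSeq, List.getD_eq_getElem _ _ (by rw [List.length_map, hsortlen]; exact hp),
      List.getElem_map, List.getD_eq_getElem _ _ (by omega)]
  have hfirst : nthPos (swSeq m R) false 1 = k + 1 := by
    apply Recover.first_false _ _ (by omega)
    · intro p hp
      rw [hw p (by omega)]
      have hplt : (R.sort (· ≤ ·)).getD p 0 < n := by
        rw [← hsort_k]
        exact Recover.sorted_lt_of_lt hp hklt
      have hpR : (R.sort (· ≤ ·)).getD p 0 ∈ R := Recover.mem_sort_getD (by omega)
      rcases hstep _ hpR with h | h
      · exact decide_eq_true h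
      · exfalso
        have := hnonneg _ h
        linarith
    · rw [hw k hklt, hsort_k]
      have : (n:ℤ) + m ∉ R := by rwa [add_comm]
      simp [this]
  -- description of leftOp as an image
  have hL'img : leftOp m n R = ((R.erase 0) ∪ {(m:ℤ) + n}).image (fun r => r - e) := by
    rw [leftOp, hmin]
  have hAfilt : ((R.erase 0) ∪ {(m:ℤ) + n}).filter (· < (n:ℤ)) =
      (R.filter (· < (n:ℤ))).erase 0 := by
    ext x
    simp only [Finset.mem_filter, Finset.mem_union, Finset.mem_erase, Finset.mem_singleton]
    constructor
    · rintro ⟨⟨hx0, hxR⟩ | rfl, hxn⟩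
      · exact ⟨hx0, hxR, hxn⟩
      · exfalso; linarith
    · rintro ⟨hx0, hxR, hxn⟩
      exact ⟨Or.inl ⟨hx0, hxR⟩, hxn⟩
  have hfiltL : ((leftOp m n R).filter (· < (n:ℤ) - e)).card = k - 1 := by
    rw [hL'img, Finset.filter_image]
    rw [Finset.card_image_of_injective _ sub_left_injective]
    have hpred : ∀ a ∈ (R.erase 0) ∪ {(m:ℤ) + n}, (a - e < (n:ℤ) - e ↔ a < n) := by
      intro a _
      exact sub_lt_sub_iff_right e
    rw [Finset.filter_congr (fun a ha => by rw [hpred a ha]), hAfilt,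
      Finset.card_erase_of_mem h0f]
  have hnL' : (n:ℤ) - e ∈ leftOp m n R := by
    rw [hL'img]
    exact Finset.mem_image.2 ⟨n, Finset.mem_union_left _
      (Finset.mem_erase.2 ⟨by positivity, hnR⟩), rfl⟩
  have hgoal1 : sortedRank (leftOp m n R) (nthPos (swSeq m R) false 1 - 1) = (n:ℤ) - e := by
    rw [hfirst]
    show ((leftOp m n R).sort (· ≤ ·)).getD (k + 1 - 1 - 1) 0 = (n:ℤ) - e
    have hk11 : k + 1 - 1 - 1 = k - 1 := by omega
    rw [hk11]
    exact Recover.sorted_getD _ _ (k - 1) hnL' hfiltL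
  refine ⟨by rw [hgoal1, hr2]; ring, ?_⟩
  rw [hr2]
  have himg : (leftOp m n R).image (fun x => e + x) = (R.erase 0) ∪ {(m:ℤ) + n} := by
    rw [hL'img, Finset.image_image]
    have hid : ((fun x => e + x) ∘ (fun r => r - e)) = id := by
      funext x; simp
    rw [hid, Finset.image_id]
  rw [himg]
  have herase : ((R.erase 0) ∪ {(m:ℤ) + n}).erase ((m:ℤ) + n) = R.erase 0 := by
    ext x
    simp only [Finset.mem_erase, Finset.mem_union, Finset.mem_singleton]
    constructor
    · rintro ⟨hx, ⟨hx0, hxR⟩ | rfl⟩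
      · exact ⟨hx0, hxR⟩
      · exact absurd rfl hx
    · rintro ⟨hx0, hxR⟩
      refine ⟨?_, Or.inl ⟨hx0, hxR⟩⟩
      rintro rfl
      exact hmnR hxR
  rw [herase, Finset.insert_erase h0R]
end

section
/- Let (m,n) be a coprime pair of positive integers and let R ≠ R_0 = {0,1,…,m+n−1} be the rank set of an (m,n)-Dyck path with SW-sequence σ. Let s = σ^{-1}(W_1) be the position of the first W in σ, δ = δ(R) = |R ∩ {0,1,…,m+n}|, and key(R) = |S(R) ∩ {0,1,…,m+n}|. Then the SW-sequence σ^L of ℒ(R) is obtained from σ by inserting a letter W immediately after the key(R)-th S of σ (equivalently, immediately after position δ) and then deleting the W at position s. -/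
/-- `δ(R) = |R ∩ {0, 1, …, m+n}|`. -/
def deltaStat (m n : ℕ) (R : Finset ℤ) : ℕ :=
  (R.filter (fun r => 0 ≤ r ∧ r ≤ (m : ℤ) + n)).card

/-- `key(R) = |S(R) ∩ {0, 1, …, m+n}|`, where `S(R) = R ∩ (R - m)`. -/
def keyStat (m n : ℕ) (R : Finset ℤ) : ℕ :=
  (R.filter (fun r => r + (m : ℤ) ∈ R ∧ 0 ≤ r ∧ r ≤ (m : ℤ) + n)).card

namespace SW17


def fidx (w : List Bool) (b : Bool) : List ℕ :=
  (List.range w.length).filter (fun p => w.getD p (!b) == b)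

lemma nthPos_eq (w : List Bool) (b : Bool) (j : ℕ) :
    nthPos w b j = (fidx w b).getD (j - 1) 0 + 1 := rfl

lemma fidx_nil (b : Bool) : fidx [] b = [] := rfl

lemma fidx_cons (a : Bool) (w : List Bool) (b : Bool) :
    fidx (a :: w) b = (if a = b then [0] else []) ++ (fidx w b).map (· + 1) := by
  unfold fidx
  rw [List.length_cons, List.range_succ_eq_map, List.filter_cons, List.filter_map]
  have h1 : ((a :: w).getD 0 (!b) == b) = decide (a = b) := by
    cases a <;> cases b <;> rfl
  have h2 : List.filter ((fun p => (a :: w).getD p (!b) == b) ∘ Nat.succ) (List.range w.length)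
      = List.filter (fun p => w.getD p (!b) == b) (List.range w.length) := by
    apply List.filter_congr
    intro x _
    simp [Function.comp, List.getD_cons_succ]
  rw [h1, h2]
  cases h : decide (a = b) <;> simp [h, Nat.succ_eq_add_one]
  · simp at h; simp [h]
  · simp at h; simp [h]

lemma fidx_append (x y : List Bool) (b : Bool) :
    fidx (x ++ y) b = fidx x b ++ (fidx y b).map (· + x.length) := by
  induction x with
  | nil => simp [fidx_nil]
  | cons a x ih =>
    rw [List.cons_append, fidx_cons, fidx_cons, ih, List.map_append, List.map_map,
      List.append_assoc]
    congr 2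

lemma fidx_replicate_true (t : ℕ) : fidx (List.replicate t true) true = List.range t := by
  induction t with
  | zero => rfl
  | succ t ih =>
    rw [List.replicate_succ, fidx_cons, ih, List.range_succ_eq_map]
    simp [Nat.succ_eq_add_one]

lemma fidx_replicate_true_false (t : ℕ) : fidx (List.replicate t true) false = [] := by
  induction t with
  | zero => rfl
  | succ t ih => rw [List.replicate_succ, fidx_cons, ih]; simp

lemma length_fidx (w : List Bool) (b : Bool) : (fidx w b).length = w.count b := by
  induction w with
  | nil => rfl
  | cons a w ih =>
    rw [fidx_cons]
    rcases eq_or_ne a b with h | h <;>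
      simp [h, List.count_cons, ih]




lemma fidx_sorted (w : List Bool) (b : Bool) : (fidx w b).Pairwise (· < ·) :=
  List.pairwise_lt_range.filter _

lemma mem_fidx {w : List Bool} {b : Bool} {i : ℕ} :
    i ∈ fidx w b ↔ i < w.length ∧ w.getD i (!b) = b := by
  unfold fidx
  simp [List.mem_filter, List.mem_range]

lemma le_of_mem_sorted {l : List ℕ} (hs : l.Pairwise (· < ·)) {x : ℕ} (hx : x ∈ l) :
    x ≤ l.getD (l.length - 1) 0 := by
  obtain ⟨i, hi, rfl⟩ := List.mem_iff_getElem.mp hx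
  have hl : 0 < l.length := lt_of_le_of_lt (Nat.zero_le i) hi
  rw [List.getD_eq_getElem l 0 (by omega)]
  rcases eq_or_lt_of_le (Nat.le_sub_one_of_lt hi) with h | h
  · simp [h]
  · exact le_of_lt (hs.rel_get_of_lt (a := ⟨i, hi⟩) (b := ⟨l.length - 1, by omega⟩) h)

lemma insert_run (w : List Bool) (p q : ℕ) (hpq : p ≤ q) (hq : q ≤ w.length)
    (h : ∀ i, p ≤ i → i < q → w.getD i true = false) :
    w.take p ++ false :: w.drop p = w.take q ++ false :: w.drop q := by
  induction q, hpq using Nat.le_induction with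
  | base => rfl
  | succ q hpq ih =>
    have hq' : q < w.length := by omega
    have hwq : w[q] = false := by
      have := h q hpq (by omega)
      rwa [List.getD_eq_getElem w true hq'] at this
    rw [ih (by omega) (fun i h1 h2 => h i h1 (by omega)),
      List.take_succ, List.drop_eq_getElem_cons hq']
    simp [List.getElem?_eq_getElem hq', hwq]

lemma all_false_getD {M : List Bool} (hM : M.count true = 0) {i : ℕ} (hi : i < M.length) :
    M.getD i true = false := by
  rw [List.getD_eq_getElem M true hi]
  have : true ∉ M := List.count_eq_zero.mp hM
  cases hMi : M[i]
  · rfl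
  · exact absurd (hMi ▸ List.getElem_mem hi) this

lemma nthPos_false_one (t : ℕ) (z : List Bool) :
    nthPos (List.replicate t true ++ false :: z) false 1 = t + 1 := by
  rw [nthPos_eq, fidx_append, fidx_replicate_true_false, fidx_cons]
  simp

lemma nthPos_true_spec (t : ℕ) (M N : List Bool) (ht : 1 ≤ t) :
    nthPos (List.replicate t true ++ false :: (M ++ N)) true (t + M.count true)
        ≤ t + 1 + M.length ∧
      ∀ i, nthPos (List.replicate t true ++ false :: (M ++ N)) true (t + M.count true) ≤ i →
        i < t + 1 + M.length →
        (List.replicate t true ++ false :: (M ++ N)).getD i true = false := by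
  set w := List.replicate t true ++ false :: (M ++ N) with hw
  have hwgetD : ∀ i, t + 1 ≤ i → w.getD i true = (M ++ N).getD (i - t - 1) true := by
    intro i hi
    rw [hw, List.getD_append_right _ _ _ _ (by simp; omega)]
    simp only [List.length_replicate]
    rw [show i - t = (i - t - 1) + 1 by omega, List.getD_cons_succ]
    simp
  have hfw : fidx w true = List.range t ++
      ((fidx M true ++ (fidx N true).map (· + M.length)).map (· + (t + 1))) := by
    rw [hw, fidx_append, fidx_replicate_true, fidx_cons, fidx_append]
    rw [if_neg (by simp), List.nil_append]
    simp only [List.length_replicate, List.map_map]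
    congr 1
    apply List.map_congr_left; intro z _; simp [Function.comp]; omega
  rw [nthPos_eq, hfw]
  rcases Nat.eq_zero_or_pos (M.count true) with hk | hk
  · -- no trues in M
    have hfM : fidx M true = [] := List.length_eq_zero_iff.mp ((length_fidx M true).trans hk)
    rw [hk]
    rw [List.getD_append _ _ _ _ (by simp; omega), List.getD_eq_getElem _ _ (by simp; omega),
      List.getElem_range]
    constructor
    · omega
    · intro i h1 h2
      rcases eq_or_lt_of_le (show t ≤ i by omega) with h | h
      · rw [hw, ← h, List.getD_append_right _ _ _ _ (by simp), ]
        simp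
      · rw [hwgetD i (by omega), List.getD_append _ _ _ _ (by omega)]
        exact all_false_getD hk (by omega)
  · -- some trues in M
    have hlenM : (fidx M true).length = M.count true := length_fidx M true
    have hidx : t + M.count true - 1 - t = M.count true - 1 := by omega
    rw [List.getD_append_right _ _ _ _ (by simp; omega)]
    simp only [List.length_range, hidx]
    have hlt : M.count true - 1 <
        ((fidx M true ++ (fidx N true).map (· + M.length)).map (· + (t + 1))).length := by
      simp; omega
    rw [List.getD_eq_getElem _ _ hlt, List.getElem_map, List.getElem_append_left (by omega)]
    set j := (fidx M true)[M.count true - 1]'(by omega) with hj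
    have hjmem : j ∈ fidx M true := List.getElem_mem _
    have hjlt : j < M.length := (mem_fidx.mp hjmem).1
    have hjmax : ∀ x ∈ fidx M true, x ≤ j := by
      intro x hx
      have h1 := le_of_mem_sorted (fidx_sorted M true) hx
      have h2 : (fidx M true).getD ((fidx M true).length - 1) 0 = j := by
        rw [List.getD_eq_getElem _ _ (by omega), hj]
        congr 1
        omega
      omega
    constructor
    · omega
    · intro i h1 h2
      rw [hwgetD i (by omega), List.getD_append _ _ _ _ (by omega)]
      set i' := i - t - 1 with hi'
      by_contra hcon
      have : M.getD i' true = true := by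
        cases hMi : M.getD i' true
        · exact absurd hMi hcon
        · rfl
      have hmem : i' ∈ fidx M true := by
        rw [mem_fidx]
        refine ⟨by omega, ?_⟩
        rwa [List.getD_eq_getElem _ _ (by omega)] at this ⊢
      have := hjmax i' hmem
      omega




lemma rankWalk_eq_map (m n : ℤ) (P : List Bool) (r₀ : ℤ) :
    rankWalk m n P r₀ = (List.range P.length).map
      (fun k => r₀ + m * ((P.take k).count true) - n * ((P.take k).count false)) := by
  induction P generalizing r₀ with
  | nil => simp [rankWalk]
  | cons b bs ih =>
    rw [rankWalk, ih, List.length_cons, List.range_succ_eq_map, List.map_cons, List.map_map]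
    congr 1
    · simp
    · apply List.map_congr_left
      intro k _
      simp only [Function.comp, Nat.succ_eq_add_one, List.take_succ_cons, List.count_cons]
      cases b <;> simp <;> ring

lemma mem_rankWalk {m n : ℤ} {P : List Bool} {r : ℤ} :
    r ∈ rankWalk m n P 0 ↔ ∃ k < P.length,
      r = m * ((P.take k).count true) - n * ((P.take k).count false) := by
  rw [rankWalk_eq_map]
  simp [eq_comm]

lemma count_false_take {P : List Bool} {k : ℕ} (hk : k ≤ P.length) :
    ((P.take k).count false) = k - (P.take k).count true := by
  have h1 := List.count_false_add_count_true (P.take k)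
  have h2 : (P.take k).length = k := by simp [hk]
  omega

lemma count_true_take_succ (P : List Bool) (k : ℕ) :
    (P.take k).count true ≤ (P.take (k+1)).count true ∧
      (P.take (k+1)).count true ≤ (P.take k).count true + 1 := by
  rw [List.take_succ, List.count_append]
  have : (P[k]?.toList).count true ≤ 1 := by
    cases h : P[k]? <;> simp [List.count_le_length, List.count]
    cases ‹Bool›  <;> simp
  omega

theorem rankSet_props (m n : ℕ) (hm : 0 < m) (hn : 0 < n) (hcop : Nat.Coprime m n)
    (R : Finset ℤ) (hR : IsDyckRankSet m n R) :
    (0:ℤ) ∈ R ∧ (∀ r ∈ R, 0 ≤ r) ∧ (m:ℤ) ∈ R ∧ (n:ℤ) ∈ R ∧ ((m:ℤ)+n) ∉ R ∧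
      (2*(m:ℤ)+n) ∉ R ∧ (∀ r ∈ R, r + m ∉ R → (n:ℤ) ≤ r) := by
  obtain ⟨P, ⟨⟨hlen, hct⟩, hdy⟩, rfl⟩ := hR
  have hmemR : ∀ r : ℤ, r ∈ rankSet m n P ↔ ∃ k < P.length,
      r = m * ((P.take k).count true) - n * ((P.take k).count false) := by
    intro r; rw [rankSet, List.mem_toFinset, mem_rankWalk]
  have hpos : ∀ r ∈ rankSet m n P, 0 ≤ r := by
    intro r hr; exact hdy r (List.mem_toFinset.mp hr)
  have hlen2 : 0 < P.length := by omega
  have hct' : ∀ k ≤ P.length, (P.take k).count true ≤ n := by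
    intro k hk
    calc (P.take k).count true ≤ P.count true := (List.take_sublist k P).count_le true
    _ = n := hct
  -- the generic form of a rank
  have hform : ∀ r ∈ rankSet m n P, ∃ c k : ℕ, c ≤ n ∧ c ≤ k ∧ k < m + n ∧ k - c ≤ m ∧
      r = (m:ℤ) * c - n * (k - c) := by
    intro r hr
    obtain ⟨k, hk, hrk⟩ := (hmemR r).mp hr
    refine ⟨(P.take k).count true, k, hct' k (le_of_lt hk), List.count_le_length.trans (by simp [le_of_lt hk]), by omega, ?_, ?_⟩
    · have := count_false_take (le_of_lt hk)
      have h2 : (P.take k).count false ≤ m := by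
        calc (P.take k).count false ≤ P.count false := (List.take_sublist k P).count_le false
        _ ≤ m := by
            have h3 := List.count_false_add_count_true P
            omega
      omega
    · rw [hrk, count_false_take (le_of_lt hk)]
      have h4 : (P.take k).count true ≤ k := List.count_le_length.trans (by simp [le_of_lt hk])
      push_cast [Nat.cast_sub h4]
      ring_nf
  set f : ℕ → ℤ := fun k => (m:ℤ) * ((P.take k).count true) - n * ((P.take k).count false)
    with hf
  have hmem' : ∀ k < P.length, f k ∈ rankSet m n P := fun k hk => (hmemR _).mpr ⟨k, hk, rfl⟩
  have hg : ∀ k, k ≤ P.length →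
      f k = (m:ℤ) * ((P.take k).count true) - n * ((k:ℤ) - ((P.take k).count true)) := by
    intro k hk
    simp only [hf]
    have h4 : (P.take k).count true ≤ k := List.count_le_length.trans (by simp [hk])
    rw [count_false_take hk]
    push_cast [Nat.cast_sub h4]
    ring_nf
  have h0 : (0:ℤ) ∈ rankSet m n P := by
    have h := hmem' 0 hlen2
    simpa [hf] using h
  have hone : 1 < P.length := by omega
  have hmR : (m:ℤ) ∈ rankSet m n P := by
    have hc1 : (P.take 1).count true = 0 ∨ (P.take 1).count true = 1 := by
      have := List.count_le_length (a := true) (l := P.take 1)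
      simp [hone.le] at this
      omega
    rcases hc1 with h | h
    · exfalso
      have hp := hpos _ (hmem' 1 hone)
      rw [hg 1 hone.le, h] at hp
      push_cast at hp
      have : (0:ℤ) < n := by exact_mod_cast hn
      omega
    · have h5 := hmem' 1 hone
      rw [hg 1 hone.le, h] at h5
      push_cast at h5
      simpa using h5
  have hlast : f (P.length - 1) = n := by
    set K := P.length - 1 with hK
    have hKle : K ≤ P.length := by omega
    have hsucc := count_true_take_succ P K
    have htf : P.take (K + 1) = P := by
      apply List.take_of_length_le; omega
    rw [htf, hct] at hsucc
    set c := (P.take K).count true with hc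
    have hcn : c = n - 1 ∨ c = n := by omega
    rcases hcn with h | h
    · exfalso
      have hp := hpos _ (hmem' K (by omega))
      rw [hg K hKle, ← hc, h] at hp
      have hn1 : (((n - 1 : ℕ)):ℤ) = (n:ℤ) - 1 := by
        push_cast [Nat.cast_sub hn]
        ring
      rw [hn1] at hp
      have hKv : (K:ℤ) = (m:ℤ) + n - 1 := by
        rw [hK, hlen]
        have h9 : 1 ≤ m + n := by omega
        push_cast [Nat.cast_sub h9]
        ring
      rw [hKv] at hp
      have hm' : (0:ℤ) < m := by exact_mod_cast hm
      nlinarith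
    · rw [hg K hKle, ← hc, h]
      have hKv : (K:ℤ) = (m:ℤ) + n - 1 := by
        rw [hK, hlen]
        have h9 : 1 ≤ m + n := by omega
        push_cast [Nat.cast_sub h9]
        ring
      rw [hKv]
      ring
  have hnR : (n:ℤ) ∈ rankSet m n P := hlast ▸ hmem' _ (by omega)
  have hcopZ : IsCoprime (n:ℤ) (m:ℤ) := by
    rw [Int.isCoprime_iff_gcd_eq_one, Int.gcd_natCast_natCast]
    exact hcop.symm
  have hnpos : (0:ℤ) < n := by exact_mod_cast hn
  have hmpos : (0:ℤ) < m := by exact_mod_cast hm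
  have hmnR : ((m:ℤ)+n) ∉ rankSet m n P := by
    intro hmem
    obtain ⟨c, k, hcn, hck, hkmn, hkcm, heq⟩ := hform _ hmem
    have heq2 : (m:ℤ) * ((c:ℤ) - 1) = n * (((k:ℤ) - c) + 1) := by linarith
    have hdvd : (n:ℤ) ∣ ((c:ℤ) - 1) :=
      hcopZ.dvd_of_dvd_mul_left ⟨_, heq2⟩
    have hpos2 : (0:ℤ) < (c:ℤ) - 1 := by
      have hkc : (c:ℤ) ≤ k := by exact_mod_cast hck
      nlinarith
    have h7 := Int.le_of_dvd hpos2 hdvd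
    have h8 : (c:ℤ) ≤ n := by exact_mod_cast hcn
    omega
  have h2mnR : (2*(m:ℤ)+n) ∉ rankSet m n P := by
    intro hmem
    obtain ⟨c, k, hcn, hck, hkmn, hkcm, heq⟩ := hform _ hmem
    have heq2 : (m:ℤ) * ((c:ℤ) - 2) = n * (((k:ℤ) - c) + 1) := by linarith
    have hdvd : (n:ℤ) ∣ ((c:ℤ) - 2) :=
      hcopZ.dvd_of_dvd_mul_left ⟨_, heq2⟩
    have hpos2 : (0:ℤ) < (c:ℤ) - 2 := by
      have hkc : (c:ℤ) ≤ k := by exact_mod_cast hck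
      nlinarith
    have h7 := Int.le_of_dvd hpos2 hdvd
    have h8 : (c:ℤ) ≤ n := by exact_mod_cast hcn
    omega
  refine ⟨h0, hpos, hmR, hnR, hmnR, h2mnR, ?_⟩
  intro r hr hrm
  obtain ⟨k, hk, hrk⟩ := (hmemR r).mp hr
  rcases eq_or_lt_of_le (show k + 1 ≤ P.length by omega) with hkk | hkk
  · -- k = P.length - 1
    have h9 : r = f k := by simp only [hf]; exact hrk
    have h10 : k = P.length - 1 := by omega
    rw [h9, h10, hlast]
  · -- k + 1 < P.length
    have hsucc := count_true_take_succ P k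
    set c := (P.take k).count true with hc
    set c' := (P.take (k+1)).count true with hc'
    have hrg : r = (m:ℤ) * (c:ℤ) - n * ((k:ℤ) - c) := by
      have h9 : r = f k := by simp only [hf]; exact hrk
      rw [h9]
      exact hg k (by omega)
    rcases (show c' = c ∨ c' = c + 1 by omega) with h | h
    · -- east step : r - n in R
      have hf1 : f (k+1) = r - n := by
        rw [hg (k+1) (by omega), ← hc', h, hrg]
        push_cast
        ring
      have := hpos _ (hf1 ▸ hmem' (k+1) hkk)
      omega
    · -- north step : r + m in R, contradiction
      exfalso
      apply hrm
      have hf1 : f (k+1) = r + m := by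
        rw [hg (k+1) (by omega), ← hc', h, hrg]
        push_cast
        ring
      exact hf1 ▸ hmem' (k+1) hkk


end SW17
namespace SW17

lemma sorted_split {l : List ℤ} (hs : l.Pairwise (· < ·)) (K : ℤ) :
    ∃ l₁ l₂, l = l₁ ++ l₂ ∧ (∀ x ∈ l₁, x < K) ∧ (∀ x ∈ l₂, K ≤ x) := by
  induction l with
  | nil => exact ⟨[], [], rfl, by simp, by simp⟩
  | cons a l ih =>
    rw [List.pairwise_cons] at hs
    by_cases ha : a < K
    · obtain ⟨l₁, l₂, hl, h1, h2⟩ := ih hs.2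
      refine ⟨a :: l₁, l₂, by rw [hl]; rfl, ?_, h2⟩
      intro x hx
      rcases List.mem_cons.mp hx with rfl | hx
      · exact ha
      · exact h1 x hx
    · refine ⟨[], a :: l, rfl, by simp, ?_⟩
      intro x hx
      rcases List.mem_cons.mp hx with rfl | hx
      · omega
      · have := hs.1 x hx; omega

lemma eraseIdx_append_len {α : Type*} (x y : List α) (k : ℕ) :
    (x ++ y).eraseIdx (x.length + k) = x ++ y.eraseIdx k := by
  induction x with
  | nil => simp
  | cons a x ih =>
    rw [List.cons_append, List.length_cons,
      show x.length + 1 + k = (x.length + k) + 1 by omega,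
      List.eraseIdx_cons_succ, ih, List.cons_append]

lemma sort_coe (s : Finset ℤ) :
    ((Finset.sort s (· ≤ ·) : List ℤ) : Multiset ℤ) = s.val := by
  rw [← Finset.coe_toList]
  exact Multiset.coe_eq_coe.mpr (Finset.sort_perm_toList _ _)

lemma card_filter_sort (R : Finset ℤ) (p : ℤ → Prop) [DecidablePred p] :
    (R.filter p).card = (R.sort (· ≤ ·)).countP (fun x => decide (p x)) := by
  rw [Finset.card, Finset.filter_val, ← Multiset.countP_eq_card_filter,
    ← sort_coe R, Multiset.coe_countP]

end SW17
/-- Let `R ≠ R₀` be the rank set of an `(m,n)`-Dyck path with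
SW-sequence `σ`, let `s = σ⁻¹(W_1)`, `δ = δ(R) = |R ∩ {0,…,m+n}|`, and
`key(R) = |S(R) ∩ {0,…,m+n}|`.  Then the SW-sequence of `ℒ(R)` is obtained from `σ`
by inserting a `W` immediately after the `key(R)`-th `S` of `σ` (equivalently,
immediately after position `δ`), and then deleting the `W` at position `s`. -/
theorem swSeq_leftOp (m n : ℕ) (hm : 0 < m) (hn : 0 < n) (hcop : Nat.Coprime m n)
    (R : Finset ℤ) (hR : IsDyckRankSet m n R) (hne : R ≠ baseRankSet m n) :
    swSeq m (leftOp m n R) =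
      ((swSeq m R).take (nthPos (swSeq m R) true (keyStat m n R)) ++
        false :: (swSeq m R).drop (nthPos (swSeq m R) true (keyStat m n R))).eraseIdx
        (nthPos (swSeq m R) false 1 - 1) ∧
    swSeq m (leftOp m n R) =
      ((swSeq m R).take (deltaStat m n R) ++
        false :: (swSeq m R).drop (deltaStat m n R)).eraseIdx
        (nthPos (swSeq m R) false 1 - 1) := by
  obtain ⟨h0, hpos, hmR, hnR, hmnR, h2mnR, hW⟩ := SW17.rankSet_props m n hm hn hcop R hR
  have hn0 : (0:ℤ) < n := by exact_mod_cast hn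
  have hm0 : (0:ℤ) < m := by exact_mod_cast hm
  set L := Finset.sort R (· ≤ ·) with hL
  have hLs : L.Pairwise (· < ·) := (Finset.sortedLT_sort R).pairwise
  have hmemL : ∀ x : ℤ, x ∈ L ↔ x ∈ R := fun x => Finset.mem_sort _
  obtain ⟨A, B, hAB⟩ := List.append_of_mem ((hmemL _).mpr hnR)
  have hLsAB : (A ++ (n:ℤ) :: B).Pairwise (· < ·) := hAB ▸ hLs
  have hA_lt : ∀ x ∈ A, x < n := by
    rw [List.pairwise_append] at hLsAB
    exact fun x hx => hLsAB.2.2 x hx n (by simp)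
  have hB_gt : ∀ x ∈ B, (n:ℤ) < x := by
    have h := hLsAB
    rw [List.pairwise_append, List.pairwise_cons] at h
    exact fun x hx => h.2.1.1 x hx
  obtain ⟨A', hA'⟩ : ∃ A', A = 0 :: A' := by
    have h0L : (0:ℤ) ∈ L := (hmemL _).mpr h0
    have h0A : (0:ℤ) ∈ A := by
      rw [hAB, List.mem_append, List.mem_cons] at h0L
      rcases h0L with h | h | h
      · exact h
      · exfalso; omega
      · exfalso; have := hB_gt 0 h; omega
    cases A with
    | nil => simp at h0A
    | cons a A' =>
      rcases List.mem_cons.mp h0A with h | h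
      · exact ⟨A', by rw [h]⟩
      · exfalso
        have hAs : (a :: A').Pairwise (· < ·) := (List.pairwise_append.mp hLsAB).1
        have ha0 : a < 0 := (List.pairwise_cons.mp hAs).1 0 h
        have : (0:ℤ) ≤ a := hpos a ((hmemL a).mp (by rw [hAB]; simp))
        omega
  have hBs : B.Pairwise (· < ·) := by
    have h := hLsAB
    rw [List.pairwise_append, List.pairwise_cons] at h
    exact h.2.1.2
  obtain ⟨B₁, B₂, hB12, hB₁lt, hB₂ge⟩ := SW17.sorted_split hBs ((m:ℤ)+n)
  have hLdecomp : L = 0 :: A' ++ (n:ℤ) :: B₁ ++ B₂ := by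
    rw [hAB, hA', hB12]; simp
  have hmemLR : ∀ x ∈ L, x ∈ R := fun x hx => (hmemL x).mp hx
  have hA'mem : ∀ x ∈ A', x ∈ R ∧ 0 < x ∧ x < n := by
    intro x hx
    refine ⟨hmemLR x (by rw [hLdecomp]; simp [hx]), ?_, ?_⟩
    · have := (List.pairwise_cons.mp (hLdecomp ▸ hLs)).1 x (by simp [hx])
      omega
    · exact hA_lt x (by rw [hA']; simp [hx])
  have hB₁mem : ∀ x ∈ B₁, x ∈ R ∧ (n:ℤ) < x ∧ x < (m:ℤ)+n := by
    intro x hx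
    exact ⟨hmemLR x (by rw [hLdecomp]; simp [hx]),
      hB_gt x (by rw [hB12]; simp [hx]), hB₁lt x hx⟩
  have hB₂mem : ∀ x ∈ B₂, x ∈ R ∧ (m:ℤ)+n < x := by
    intro x hx
    refine ⟨hmemLR x (by rw [hLdecomp]; simp [hx]), ?_⟩
    have h1 := hB₂ge x hx
    have h2 : x ≠ (m:ℤ)+n := by
      intro h
      exact hmnR (h ▸ hmemLR x (by rw [hLdecomp]; simp [hx]))
    omega
  -- pairwise of pieces
  have hTpw : (A' ++ (n:ℤ) :: B₁ ++ B₂).Pairwise (· < ·) :=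
    (List.pairwise_cons.mp (hLdecomp ▸ hLs)).2
  have hApp := List.pairwise_append.mp hTpw
  have hApp2 := List.pairwise_append.mp hApp.1
  have hA'pw : A'.Pairwise (· < ·) := hApp2.1
  have hB₁pw : B₁.Pairwise (· < ·) := (List.pairwise_cons.mp hApp2.2.1).2
  have hB₂pw : B₂.Pairwise (· < ·) := hApp.2.1
  have hB₁B₂cross : ∀ x ∈ B₁, ∀ y ∈ B₂, x < y := by
    intro x hx y hy
    exact hApp.2.2 x (by simp [hx]) y hy
  -- the SW sequence of R
  set f : ℤ → Bool := fun r => decide (r + (m:ℤ) ∈ R) with hf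
  have hσ : swSeq m R = L.map f := rfl
  have hfA' : ∀ x ∈ A', f x = true := by
    intro x hx
    obtain ⟨hxR, hx0, hxn⟩ := hA'mem x hx
    simp only [hf, decide_eq_true_eq]
    by_contra h
    have := hW x hxR h
    omega
  have hf0 : f 0 = true := by
    simp only [hf, decide_eq_true_eq, zero_add]
    exact hmR
  have hfn : f n = false := by
    simp only [hf, decide_eq_false_iff_not]
    rw [add_comm]
    exact hmnR
  set M := B₁.map f with hM
  set N := B₂.map f with hN
  set t := A'.length + 1 with ht
  have hmapA : (0 :: A').map f = List.replicate t true := by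
    rw [List.eq_replicate_iff]
    constructor
    · simp [ht]
    · intro b hb
      rw [List.map_cons, List.mem_cons] at hb
      rcases hb with rfl | hb
      · exact hf0
      · obtain ⟨x, hx, rfl⟩ := List.mem_map.mp hb
        exact hfA' x hx
  have hσ2 : swSeq m R = List.replicate t true ++ false :: (M ++ N) := by
    rw [hσ, hLdecomp]
    have : (0 :: A' ++ (n:ℤ) :: B₁ ++ B₂).map f
        = (0 :: A').map f ++ f n :: (B₁.map f ++ B₂.map f) := by
      simp
    rw [this, hmapA, hfn]
  -- delta
  have hδ : deltaStat m n R = t + 1 + B₁.length := by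
    rw [deltaStat, SW17.card_filter_sort, ← hL, hLdecomp]
    rw [show (0 :: A' ++ (n:ℤ) :: B₁ ++ B₂) = 0 :: (A' ++ (n:ℤ) :: (B₁ ++ B₂)) by simp]
    rw [List.countP_cons, List.countP_append, List.countP_cons, List.countP_append]
    have hA'c : A'.countP (fun x => decide (0 ≤ x ∧ x ≤ (m:ℤ)+n)) = A'.length := by
      apply List.countP_eq_length.mpr
      intro x hx
      obtain ⟨_, h1, h2⟩ := hA'mem x hx
      simp; constructor <;> omega
    have hB₁c : B₁.countP (fun x => decide (0 ≤ x ∧ x ≤ (m:ℤ)+n)) = B₁.length := by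
      apply List.countP_eq_length.mpr
      intro x hx
      obtain ⟨_, h1, h2⟩ := hB₁mem x hx
      simp; constructor <;> omega
    have hB₂c : B₂.countP (fun x => decide (0 ≤ x ∧ x ≤ (m:ℤ)+n)) = 0 := by
      apply List.countP_eq_zero.mpr
      intro x hx
      have := (hB₂mem x hx).2
      simp; intro; omega
    rw [hA'c, hB₁c, hB₂c]
    have h1 : (decide (0 ≤ (0:ℤ) ∧ (0:ℤ) ≤ (m:ℤ)+n) : Bool) = true := by
      simp only [decide_eq_true_eq]; omega
    have h2 : (decide (0 ≤ (n:ℤ) ∧ (n:ℤ) ≤ (m:ℤ)+n) : Bool) = true := by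
      simp only [decide_eq_true_eq]; omega
    rw [h1, h2, ht]
    simp
    omega
  -- key
  have hMcount : M.count true = B₁.countP f := by
    rw [hM, List.count, List.countP_map]
    apply List.countP_congr
    intro x _
    simp
  have hkey : keyStat m n R = t + M.count true := by
    rw [keyStat, SW17.card_filter_sort, ← hL, hLdecomp, hMcount]
    rw [show (0 :: A' ++ (n:ℤ) :: B₁ ++ B₂) = 0 :: (A' ++ (n:ℤ) :: (B₁ ++ B₂)) by simp]
    rw [List.countP_cons, List.countP_append, List.countP_cons, List.countP_append]
    have hA'c : A'.countP (fun x => decide (x + (m:ℤ) ∈ R ∧ 0 ≤ x ∧ x ≤ (m:ℤ)+n))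
        = A'.length := by
      apply List.countP_eq_length.mpr
      intro x hx
      obtain ⟨_, h1, h2⟩ := hA'mem x hx
      have h3 := hfA' x hx
      simp only [hf, decide_eq_true_eq] at h3
      simp [h3]; constructor <;> omega
    have hB₁c : B₁.countP (fun x => decide (x + (m:ℤ) ∈ R ∧ 0 ≤ x ∧ x ≤ (m:ℤ)+n))
        = B₁.countP f := by
      apply List.countP_congr
      intro x hx
      obtain ⟨_, h1, h2⟩ := hB₁mem x hx
      simp only [hf]
      constructor
      · intro h; simp at h ⊢; exact h.1
      · intro h; simp at h ⊢; exact ⟨h, by omega, by omega⟩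
    have hB₂c : B₂.countP (fun x => decide (x + (m:ℤ) ∈ R ∧ 0 ≤ x ∧ x ≤ (m:ℤ)+n)) = 0 := by
      apply List.countP_eq_zero.mpr
      intro x hx
      have := (hB₂mem x hx).2
      simp; intro _ _; omega
    have h1 : (decide ((0:ℤ) + (m:ℤ) ∈ R ∧ 0 ≤ (0:ℤ) ∧ (0:ℤ) ≤ (m:ℤ)+n) : Bool) = true := by
      simp only [zero_add, decide_eq_true_eq]
      exact ⟨hmR, le_refl _, by omega⟩
    have h2 : (decide ((n:ℤ) + (m:ℤ) ∈ R ∧ 0 ≤ (n:ℤ) ∧ (n:ℤ) ≤ (m:ℤ)+n) : Bool) = false := by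
      simp only [decide_eq_false_iff_not]
      intro h
      rw [add_comm] at h
      exact hmnR h.1
    rw [hA'c, hB₁c, hB₂c, h1, h2, ht]
    simp
    omega
  -- position of first W
  have hs : nthPos (swSeq m R) false 1 = t + 1 := by
    rw [hσ2]
    exact SW17.nthPos_false_one t (M ++ N)
  -- the left operation side
  set c := WithTop.untopD 0 (R.erase 0).min with hc
  set U := insert ((m:ℤ)+n) (R.erase 0) with hU
  have hR' : leftOp m n R = U.image (fun r => r - c) := by
    rw [leftOp, Finset.union_comm]
    rfl
  have hmemR' : ∀ y : ℤ, y ∈ leftOp m n R ↔ y + c ∈ U := by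
    intro y
    rw [hR', Finset.mem_image]
    constructor
    · rintro ⟨z, hz, rfl⟩
      simpa using hz
    · intro h
      exact ⟨y + c, h, by ring⟩
  have hmemU : ∀ x : ℤ, x ∈ U ↔ (x = (m:ℤ)+n ∨ (x ∈ R ∧ x ≠ 0)) := by
    intro x
    rw [hU, Finset.mem_insert, Finset.mem_erase]
    tauto
  set T' : List ℤ := A' ++ (n:ℤ) :: B₁ ++ ((m:ℤ)+n) :: B₂ with hT'
  have hT's : T'.Pairwise (· < ·) := by
    rw [hT']
    rw [show (A' ++ (n:ℤ) :: B₁ ++ ((m:ℤ)+n) :: B₂)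
        = A' ++ ((n:ℤ) :: (B₁ ++ ((m:ℤ)+n) :: B₂)) by simp]
    rw [List.pairwise_append, List.pairwise_cons, List.pairwise_append, List.pairwise_cons]
    refine ⟨hA'pw, ⟨?_, hB₁pw, ⟨?_, hB₂pw⟩, ?_⟩, ?_⟩
    · intro x hx
      rw [List.mem_append, List.mem_cons] at hx
      rcases hx with hx | hx | hx
      · exact (hB₁mem x hx).2.1
      · omega
      · have := (hB₂mem x hx).2; omega
    · intro x hx
      exact (hB₂mem x hx).2
    · intro x hx y hy
      rw [List.mem_cons] at hy
      rcases hy with rfl | hy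
      · exact (hB₁mem x hx).2.2
      · exact hB₁B₂cross x hx y hy
    · intro x hx y hy
      have hxn := (hA'mem x hx).2.2
      rw [List.mem_cons, List.mem_append, List.mem_cons] at hy
      rcases hy with rfl | hy | hy | hy
      · exact hxn
      · have := (hB₁mem y hy).2.1; omega
      · omega
      · have := (hB₂mem y hy).2; omega
  have hsortU : Finset.sort U (· ≤ ·) = T' := by
    apply List.Perm.eq_of_pairwise' (Finset.pairwise_sort _ _)
      (hT's.imp le_of_lt)
    apply Multiset.coe_eq_coe.mp
    rw [SW17.sort_coe]
    have h2 : U.val = ((m:ℤ)+n) ::ₘ (R.erase 0).val := by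
      rw [hU]
      apply Finset.insert_val_of_notMem
      simp only [Finset.mem_erase]
      intro h
      exact hmnR h.2
    have h4 : R.val = ((0 :: A' ++ (n:ℤ) :: B₁ ++ B₂ : List ℤ) : Multiset ℤ) := by
      rw [← hLdecomp, hL, SW17.sort_coe]
    have h5 : (R.erase 0).val = ((A' ++ (n:ℤ) :: B₁ ++ B₂ : List ℤ) : Multiset ℤ) := by
      rw [Finset.erase_val, h4]
      rw [show ((0 :: A' ++ (n:ℤ) :: B₁ ++ B₂ : List ℤ) : Multiset ℤ)
          = 0 ::ₘ ((A' ++ (n:ℤ) :: B₁ ++ B₂ : List ℤ) : Multiset ℤ) from rfl]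
      exact Multiset.erase_cons_head 0 _
    rw [h2, h5]
    rw [show ((m:ℤ)+n) ::ₘ ((A' ++ (n:ℤ) :: B₁ ++ B₂ : List ℤ) : Multiset ℤ)
        = ((((m:ℤ)+n) :: (A' ++ (n:ℤ) :: B₁ ++ B₂) : List ℤ) : Multiset ℤ) from rfl]
    rw [Multiset.coe_eq_coe]
    have hT'eq : T' = (A' ++ (n:ℤ) :: B₁) ++ ((m:ℤ)+n) :: B₂ := by
      rw [hT']
    rw [hT'eq]
    exact List.perm_middle.symm
  have hinj : Function.Injective (fun x : ℤ => x - c) := sub_left_injective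
  have hsortR' : Finset.sort (leftOp m n R) (· ≤ ·) = T'.map (fun x => x - c) := by
    refine (fun hp hs => List.Perm.eq_of_pairwise' (Finset.pairwise_sort _ _) hs hp) ?_ ?_
    · apply Multiset.coe_eq_coe.mp
      rw [SW17.sort_coe]
      have hval : (leftOp m n R).val = Multiset.map (fun x => x - c) U.val := by
        rw [hR']
        exact Finset.image_val_of_injOn hinj.injOn
      have hUval : U.val = (T' : Multiset ℤ) := by
        rw [← SW17.sort_coe U, hsortU]
      rw [hval, hUval]
      rfl
    · apply List.Pairwise.map _ _ (hT's.imp le_of_lt)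
      intro a b hab
      omega
  have hgx : ∀ x : ℤ, (decide ((x - c) + (m:ℤ) ∈ leftOp m n R) : Bool)
      = decide (x + (m:ℤ) ∈ U) := by
    intro x
    apply decide_eq_decide.mpr
    rw [hmemR' ((x - c) + m), show (x - c) + (m:ℤ) + c = x + m by ring]
  have hswR' : swSeq m (leftOp m n R)
      = List.replicate t true ++ (M ++ false :: N) := by
    rw [swSeq, hsortR', List.map_map]
    have hexp : T' = A' ++ ((n:ℤ) :: (B₁ ++ ((m:ℤ)+n) :: B₂)) := by rw [hT']; simp
    rw [hexp, List.map_append, List.map_cons, List.map_append, List.map_cons]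
    have hgA' : A'.map ((fun r => decide (r + (m:ℤ) ∈ leftOp m n R)) ∘ (fun x => x - c))
        = List.replicate A'.length true := by
      rw [List.eq_replicate_iff]
      refine ⟨by simp, ?_⟩
      intro b hb
      obtain ⟨x, hx, rfl⟩ := List.mem_map.mp hb
      obtain ⟨hxR, hx0, hxn⟩ := hA'mem x hx
      have h3 := hfA' x hx
      simp only [hf, decide_eq_true_eq] at h3
      simp only [Function.comp_apply, hgx, decide_eq_true_eq, hmemU]
      right
      exact ⟨h3, by omega⟩
    have hgn : ((fun r => decide (r + (m:ℤ) ∈ leftOp m n R)) ∘ (fun x => x - c)) (n:ℤ)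
        = true := by
      simp only [Function.comp_apply, hgx, decide_eq_true_eq, hmemU]
      left
      ring
    have hgB₁ : B₁.map ((fun r => decide (r + (m:ℤ) ∈ leftOp m n R)) ∘ (fun x => x - c))
        = M := by
      rw [hM]
      apply List.map_congr_left
      intro x hx
      obtain ⟨hxR, hxn, hxmn⟩ := hB₁mem x hx
      simp only [Function.comp_apply, hgx, hf]
      apply decide_eq_decide.mpr
      rw [hmemU]
      constructor
      · rintro (h | h)
        · exfalso; omega
        · exact h.1
      · intro h
        right
        exact ⟨h, by omega⟩
    have hgmn : ((fun r => decide (r + (m:ℤ) ∈ leftOp m n R)) ∘ (fun x => x - c)) ((m:ℤ)+n)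
        = false := by
      simp only [Function.comp_apply, hgx, decide_eq_false_iff_not, hmemU]
      rintro (h | h)
      · omega
      · apply h2mnR
        have : (m:ℤ) + n + m = 2*m+n := by ring
        rw [this] at h
        exact h.1
    have hgB₂ : B₂.map ((fun r => decide (r + (m:ℤ) ∈ leftOp m n R)) ∘ (fun x => x - c))
        = N := by
      rw [hN]
      apply List.map_congr_left
      intro x hx
      obtain ⟨hxR, hxmn⟩ := hB₂mem x hx
      simp only [Function.comp_apply, hgx, hf]
      apply decide_eq_decide.mpr
      rw [hmemU]
      constructor
      · rintro (h | h)
        · exfalso; omega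
        · exact h.1
      · intro h
        right
        exact ⟨h, by omega⟩
    rw [hgA', hgn, hgB₁, hgmn, hgB₂]
    rw [ht, List.replicate_succ']
    simp
  -- final assembly
  have hMlen : M.length = B₁.length := by rw [hM]; simp
  have hsplit : List.replicate t true ++ false :: (M ++ N)
      = (List.replicate t true ++ false :: M) ++ N := by simp
  have htake : (swSeq m R).take (t + 1 + B₁.length) = List.replicate t true ++ false :: M := by
    rw [hσ2, hsplit]
    apply List.take_left'
    simp [hMlen]
    omega
  have hdrop : (swSeq m R).drop (t + 1 + B₁.length) = N := by
    rw [hσ2, hsplit]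
    apply List.drop_left'
    simp [hMlen]
    omega
  have hg2 : swSeq m (leftOp m n R) =
      ((swSeq m R).take (deltaStat m n R) ++ false :: (swSeq m R).drop (deltaStat m n R)).eraseIdx
        (nthPos (swSeq m R) false 1 - 1) := by
    rw [hδ, hs, htake, hdrop, hswR']
    rw [show t + 1 - 1 = t by omega]
    rw [show (List.replicate t true ++ false :: M) ++ false :: N
        = List.replicate t true ++ (false :: (M ++ false :: N)) by simp]
    have he := SW17.eraseIdx_append_len (List.replicate t true) (false :: (M ++ false :: N)) 0
    simp only [List.length_replicate, Nat.add_zero, List.eraseIdx_cons_zero] at he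
    rw [he]
  refine ⟨?_, hg2⟩
  have hins : (swSeq m R).take (nthPos (swSeq m R) true (keyStat m n R)) ++
        false :: (swSeq m R).drop (nthPos (swSeq m R) true (keyStat m n R))
      = (swSeq m R).take (deltaStat m n R) ++ false :: (swSeq m R).drop (deltaStat m n R) := by
    rw [hkey, hδ]
    obtain ⟨hple, hrun⟩ := SW17.nthPos_true_spec t M N (by omega)
    rw [hσ2]
    apply SW17.insert_run
    · rw [← hMlen]
      exact hple
    · simp
      omega
    · intro i h1 h2
      exact hrun i h1 (by omega)
  rw [hins, hg2]
end
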